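/- arXiv:2505.02487 — 5 statements merged into one kernel-verified Lean document; each statement's English description precedes it below -/
import Mathlib

section
/- Pinching decreases the Petz Rényi entropy: Let ρ, σ be faithful states in M_d(ℂ) and s > 0. Then D_{1+s}(ρ||σ) ≥ D_{1+s}(κ_σ(ρ)||σ). -/
open Matrix Filter
open scoped Kronecker ComplexOrder

noncomputable section

/-- A faithful state: positive definite with trace one. -/
def IsFaithfulState {n : Type*} [Fintype n] [DecidableEq n] (ρ : Matrix n n ℂ) : Prop :=
  ρ.PosDef ∧ ρ.trace = 1

/-- Functional calculus `f(A)` on Hermitian matrices. -/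
noncomputable def matFun {n : Type*} [Fintype n] [DecidableEq n]
    (f : ℝ → ℝ) (A : Matrix n n ℂ) : Matrix n n ℂ :=
  cfc f A

/-- Matrix logarithm via functional calculus. -/
noncomputable def matLog {n : Type*} [Fintype n] [DecidableEq n]
    (A : Matrix n n ℂ) : Matrix n n ℂ :=
  matFun Real.log A

/-- Real matrix power via functional calculus. -/
noncomputable def matRpow {n : Type*} [Fintype n] [DecidableEq n]
    (A : Matrix n n ℂ) (t : ℝ) : Matrix n n ℂ :=
  matFun (fun x => x ^ t) A

/-- Quantum relative entropy `D(ρ‖σ) = Tr (ρ (log ρ - log σ))`. -/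
noncomputable def relEnt {n : Type*} [Fintype n] [DecidableEq n]
    (ρ σ : Matrix n n ℂ) : ℝ :=
  (ρ * (matLog ρ - matLog σ)).trace.re

/-- Petz relative Rényi entropy `D_{1+s}(ρ‖σ)`. -/
noncomputable def petzRenyi {n : Type*} [Fintype n] [DecidableEq n]
    (s : ℝ) (ρ σ : Matrix n n ℂ) : ℝ :=
  s⁻¹ * Real.log ((matRpow ρ (1 + s) * matRpow σ (-s)).trace.re)

/-- Sandwiched relative Rényi entropy `D̃_{1+s}(ρ‖σ)`. -/
noncomputable def sandRenyi {n : Type*} [Fintype n] [DecidableEq n]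
    (s : ℝ) (ρ σ : Matrix n n ℂ) : ℝ :=
  s⁻¹ * Real.log
    ((matRpow (matRpow σ (-s / (2 * (1 + s))) * ρ * matRpow σ (-s / (2 * (1 + s)))) (1 + s)).trace.re)

/-- von Neumann entropy. -/
noncomputable def vNEnt {n : Type*} [Fintype n] [DecidableEq n]
    (τ : Matrix n n ℂ) : ℝ :=
  -(τ * matLog τ).trace.re

/-- `n`-fold Kronecker (tensor) power of a `d × d` matrix, indexed by `Fin n → Fin d`. -/
noncomputable def kronPow {d : ℕ} (A : Matrix (Fin d) (Fin d) ℂ) (n : ℕ) :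
    Matrix (Fin n → Fin d) (Fin n → Fin d) ℂ :=
  Matrix.of fun i j => ∏ k, A (i k) (j k)

/-- The set of distinct eigenvalues of a Hermitian matrix. -/
noncomputable def distinctEigs {n : Type*} [Fintype n] [DecidableEq n]
    (A : Matrix n n ℂ) : Finset ℝ :=
  if h : A.IsHermitian then Finset.image h.eigenvalues Finset.univ else ∅

/-- Spectral projection of `A` associated with the eigenvalue `μ`. -/
noncomputable def specProj {n : Type*} [Fintype n] [DecidableEq n]
    (A : Matrix n n ℂ) (μ : ℝ) : Matrix n n ℂ :=
  matFun (fun x => if x = μ then 1 else 0) A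

/-- The pinching map determined by the spectral projections of `σ`. -/
noncomputable def pinch {n : Type*} [Fintype n] [DecidableEq n]
    (σ X : Matrix n n ℂ) : Matrix n n ℂ :=
  ∑ μ ∈ distinctEigs σ, specProj σ μ * X * specProj σ μ

/-- A POVM: a finite family of positive semidefinite matrices summing to the identity. -/
def IsPOVM {n : Type*} [Fintype n] [DecidableEq n] {ι : Type*} [Fintype ι]
    (M : ι → Matrix n n ℂ) : Prop :=
  (∀ i, (M i).PosSemidef) ∧ ∑ i, M i = 1

/-- Outcome distribution of a POVM on a state. -/
noncomputable def outDist {n : Type*} [Fintype n] [DecidableEq n] {ι : Type*} [Fintype ι]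
    (M : ι → Matrix n n ℂ) (ρ : Matrix n n ℂ) : ι → ℝ :=
  fun i => ((ρ * M i).trace).re

/-- Classical relative Rényi entropy of two distributions on a finite set. -/
noncomputable def classRenyi {ι : Type*} [Fintype ι] (s : ℝ) (p q : ι → ℝ) : ℝ :=
  s⁻¹ * Real.log (∑ i, p i ^ (1 + s) * q i ^ (-s))

/-- The extension `κ ⊗ id_m` of a linear map on matrices, acting blockwise. -/
noncomputable def kronExt {d : ℕ}
    (κ : Matrix (Fin d) (Fin d) ℂ →ₗ[ℂ] Matrix (Fin d) (Fin d) ℂ) (m : ℕ)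
    (X : Matrix (Fin d × Fin m) (Fin d × Fin m) ℂ) :
    Matrix (Fin d × Fin m) (Fin d × Fin m) ℂ :=
  Matrix.of fun p q => κ (Matrix.of fun a c => X (a, p.2) (c, q.2)) p.1 q.1

/-- Trace preserving and completely positive linear map. -/
def IsTPCP {d : ℕ}
    (κ : Matrix (Fin d) (Fin d) ℂ →ₗ[ℂ] Matrix (Fin d) (Fin d) ℂ) : Prop :=
  (∀ X, (κ X).trace = X.trace) ∧
  (∀ m : ℕ, 1 ≤ m → ∀ X : Matrix (Fin d × Fin m) (Fin d × Fin m) ℂ,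
      X.PosSemidef → (kronExt κ m X).PosSemidef)

/-- Optimal type-II error under the type-I error constraint `ε` in hypothesis testing. -/
noncomputable def steinBeta {d : ℕ} (ρ σ : Matrix (Fin d) (Fin d) ℂ) (ε : ℝ) (n : ℕ) : ℝ :=
  sInf { x : ℝ | ∃ T : Matrix (Fin n → Fin d) (Fin n → Fin d) ℂ,
      T.PosSemidef ∧ (1 - T).PosSemidef ∧
      ((kronPow ρ n) * (1 - T)).trace.re ≤ ε ∧
      x = ((kronPow σ n) * T).trace.re }



section Helpers
open Polynomial
variable {n : Type*} [Fintype n] [DecidableEq n]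

lemma myconj_pow (W B : Matrix n n ℂ) (hW : Wᴴ * W = 1) (hW' : W * Wᴴ = 1) (k : ℕ) :
    (W * B * Wᴴ) ^ k = W * B ^ k * Wᴴ := by
  induction k with
  | zero => simp [hW']
  | succ m ih =>
    rw [pow_succ, ih, pow_succ]
    calc W * B ^ m * Wᴴ * (W * B * Wᴴ) = W * B ^ m * (Wᴴ * W) * (B * Wᴴ) := by
          simp only [Matrix.mul_assoc]
      _ = W * (B ^ m * B) * Wᴴ := by rw [hW]; simp only [Matrix.mul_assoc, Matrix.mul_one]

lemma myaeval_conj (W B : Matrix n n ℂ) (hW : Wᴴ * W = 1) (hW' : W * Wᴴ = 1) (p : ℝ[X]) :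
    aeval (W * B * Wᴴ) p = W * aeval B p * Wᴴ := by
  induction p using Polynomial.induction_on with
  | C r =>
    simp only [aeval_C]
    rw [Algebra.algebraMap_eq_smul_one]
    rw [Matrix.mul_smul, Matrix.smul_mul, Matrix.mul_one, hW']
  | add p q hp hq =>
    simp [hp, hq, Matrix.mul_add, Matrix.add_mul]
  | monomial k r _ =>
    simp only [_root_.map_mul, _root_.map_pow, aeval_C, aeval_X, myconj_pow W B hW hW']
    rw [Algebra.algebraMap_eq_smul_one]
    simp [Matrix.mul_smul, Matrix.smul_mul, Matrix.mul_assoc]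

lemma myaeval_diagonal (g : n → ℂ) (p : ℝ[X]) :
    aeval (Matrix.diagonal g) p = Matrix.diagonal (fun i => aeval (g i) p) := by
  have h1 := aeval_algHom_apply (Matrix.diagonalAlgHom (α := ℂ) (n := n) ℝ) g p
  have h2 : ∀ i, aeval (g i) p = (aeval g p) i := fun i =>
    aeval_algHom_apply (Pi.evalAlgHom ℝ (fun _ => ℂ) i) g p
  simp only [Matrix.diagonalAlgHom_apply] at h1
  rw [h1]
  exact congrArg diagonal (funext fun i => (h2 i).symm)

lemma myaeval_ofReal (x : ℝ) (p : ℝ[X]) :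
    aeval ((x : ℂ)) p = ((p.eval x : ℝ) : ℂ) := by
  rw [← Complex.coe_algebraMap, aeval_algebraMap_apply, aeval_def, eval]
  simp [eval₂_eq_eval_map]

lemma hermitian_of_conj (W : Matrix n n ℂ) (g : n → ℝ) :
    (W * Matrix.diagonal (Complex.ofReal ∘ g) * Wᴴ).IsHermitian := by
  unfold Matrix.IsHermitian
  rw [conjTranspose_mul, conjTranspose_mul, conjTranspose_conjTranspose,
    diagonal_conjTranspose, Matrix.mul_assoc]
  congr 2
  refine congrArg Matrix.diagonal (funext fun i => ?_)
  simp [Pi.star_def, Function.comp]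

lemma spectrum_conj_diag (W : Matrix n n ℂ) (hW : W ∈ Matrix.unitaryGroup n ℂ) (g : n → ℝ) :
    spectrum ℝ (W * Matrix.diagonal (Complex.ofReal ∘ g) * Wᴴ) ⊆ Set.range g := by
  intro x hx
  have : (W * Matrix.diagonal (Complex.ofReal ∘ g) * Wᴴ) =
      ((⟨W, hW⟩ : Matrix.unitaryGroup n ℂ) : Matrix n n ℂ) * Matrix.diagonal (Complex.ofReal ∘ g)
        * (star (⟨W, hW⟩ : Matrix.unitaryGroup n ℂ) : Matrix n n ℂ) := rfl
  rw [this, Unitary.spectrum_star_right_conjugate, ← spectrum.algebraMap_mem_iff ℂ,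
    spectrum_diagonal] at hx
  obtain ⟨i, hi⟩ := hx
  exact ⟨i, Complex.ofReal_injective hi⟩

lemma cfc_conj_diag (W : Matrix n n ℂ) (hW : W ∈ Matrix.unitaryGroup n ℂ) (g : n → ℝ)
    (f : ℝ → ℝ) :
    cfc f (W * Matrix.diagonal (Complex.ofReal ∘ g) * Wᴴ) =
      W * Matrix.diagonal (Complex.ofReal ∘ f ∘ g) * Wᴴ := by
  have hW1 : Wᴴ * W = 1 := (Matrix.mem_unitaryGroup_iff'.mp hW)
  have hW2 : W * Wᴴ = 1 := (Matrix.mem_unitaryGroup_iff.mp hW)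
  set A := W * Matrix.diagonal (Complex.ofReal ∘ g) * Wᴴ with hA
  have hAH : A.IsHermitian := hermitian_of_conj W g
  have hAsa : IsSelfAdjoint A := hAH
  set s : Finset ℝ := Finset.image g Finset.univ with hs
  set p : ℝ[X] := Lagrange.interpolate s id f with hp
  have hnode : ∀ x ∈ s, p.eval x = f x := by
    intro x hx
    have := Lagrange.eval_interpolate_at_node (v := id) (r := f) (Set.injOn_id _) hx
    exact this
  have h1 : cfc f A = cfc p.eval A := by
    apply cfc_congr
    intro x hx
    have hxs : x ∈ s := by
      obtain ⟨i, rfl⟩ := spectrum_conj_diag W hW g hx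
      exact Finset.mem_image_of_mem g (Finset.mem_univ i)
    exact (hnode x hxs).symm
  rw [h1, cfc_polynomial p A, hA, myaeval_conj W _ hW1 hW2, myaeval_diagonal]
  have hfun : (fun i => (aeval ((Complex.ofReal ∘ g) i) p)) = Complex.ofReal ∘ f ∘ g := by
    funext i
    rw [Function.comp_apply, myaeval_ofReal, Function.comp_apply, Function.comp_apply,
      hnode (g i) (Finset.mem_image_of_mem g (Finset.mem_univ i))]
  rw [hfun]

lemma sum_dite_subtype {μ : ℝ} (t : n → ℝ) [DecidablePred (fun k => t k = μ)]
    (F : {k // t k = μ} → ℂ) :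
    (∑ k : n, if h : t k = μ then F ⟨k, h⟩ else 0) = ∑ k : {k // t k = μ}, F k := by
  classical
  rw [← Finset.sum_filter_of_ne (p := fun k => t k = μ) (s := Finset.univ)
    (f := fun k => if h : t k = μ then F ⟨k, h⟩ else 0)
    (fun k _ hk => by by_contra h; rw [dif_neg h] at hk; exact hk rfl)]
  rw [Finset.sum_subtype (p := fun k => t k = μ)
    (Finset.filter (fun k => t k = μ) Finset.univ)
    (fun x => by simp) (fun k => if h : t k = μ then F ⟨k, h⟩ else 0)]
  exact Finset.sum_congr rfl fun k _ => by rw [dif_pos k.2]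

lemma block_diagonalize (M : Matrix n n ℂ) (hM : M.IsHermitian) (t : n → ℝ)
    (hb : ∀ i j, t i ≠ t j → M i j = 0) :
    ∃ V : Matrix n n ℂ, V ∈ Matrix.unitaryGroup n ℂ ∧
      (∀ i j, t i ≠ t j → V i j = 0) ∧
      ∃ q : n → ℝ, Vᴴ * M * V = Matrix.diagonal (Complex.ofReal ∘ q) := by
  classical
  let blk : ∀ μ : ℝ, Matrix {k // t k = μ} {k // t k = μ} ℂ := fun μ =>
    Matrix.of (fun i j => M i.1 j.1)
  have hblk : ∀ μ, (blk μ).IsHermitian := by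
    intro μ
    ext i j
    simpa [blk, Matrix.conjTranspose_apply] using congrFun (congrFun hM i.1) j.1
  let Vb : ∀ μ : ℝ, Matrix {k // t k = μ} {k // t k = μ} ℂ := fun μ =>
    ((hblk μ).eigenvectorUnitary : Matrix {k // t k = μ} {k // t k = μ} ℂ)
  let qb : ∀ μ : ℝ, {k // t k = μ} → ℝ := fun μ => (hblk μ).eigenvalues
  have hVbu : ∀ μ, (Vb μ)ᴴ * (Vb μ) = 1 := fun μ => by
    simpa [Vb, Matrix.star_eq_conjTranspose] using
      (Matrix.mem_unitaryGroup_iff'.mp (SetLike.coe_mem ((hblk μ).eigenvectorUnitary)))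
  have hVbd : ∀ μ, (Vb μ)ᴴ * (blk μ) * (Vb μ) =
      Matrix.diagonal (Complex.ofReal ∘ (qb μ)) := fun μ => by
    simpa [Vb, qb, Matrix.star_eq_conjTranspose, Function.comp] using
      (hblk μ).conjStarAlgAut_star_eigenvectorUnitary
  set V : Matrix n n ℂ :=
    Matrix.of (fun i j => if h : t i = t j then (Vb (t j)) ⟨i, h⟩ ⟨j, rfl⟩ else 0) with hV
  have hVcol : ∀ (μ : ℝ) (j : n) (hj : t j = μ) (k : n),
      V k j = if h : t k = μ then (Vb μ) ⟨k, h⟩ ⟨j, hj⟩ else 0 := by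
    intro μ j hj k
    subst hj
    rfl
  have hVblock : ∀ i j, t i ≠ t j → V i j = 0 := by
    intro i j hij
    simp only [hV, Matrix.of_apply, dif_neg hij]
  have key : ∀ i j, ((Vᴴ * M * V) i j = if h : t i = t j then
      Matrix.diagonal (Complex.ofReal ∘ (qb (t j))) ⟨i, h⟩ ⟨j, rfl⟩ else 0) := by
    intro i j
    have hMV : ∀ k, (M * V) k j =
        if h : t k = t j then ((blk (t j)) * (Vb (t j))) ⟨k, h⟩ ⟨j, rfl⟩ else 0 := by
      intro k
      rw [Matrix.mul_apply]
      by_cases hk : t k = t j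
      · rw [dif_pos hk, Matrix.mul_apply,
          ← sum_dite_subtype t (fun l => (blk (t j)) ⟨k, hk⟩ l * (Vb (t j)) l ⟨j, rfl⟩)]
        apply Finset.sum_congr rfl
        intro l _
        rw [hVcol (t j) j rfl l]
        by_cases hl : t l = t j
        · rw [dif_pos hl, dif_pos hl]
          rfl
        · rw [dif_neg hl, dif_neg hl, mul_zero]
      · rw [dif_neg hk]
        apply Finset.sum_eq_zero
        intro l _
        rw [hVcol (t j) j rfl l]
        by_cases hl : t l = t j
        · rw [hb k l (by rw [hl]; exact hk), zero_mul]
        · rw [dif_neg hl, mul_zero]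
    rw [Matrix.mul_assoc, Matrix.mul_apply]
    by_cases hij : t i = t j
    · rw [dif_pos hij]
      have : ∀ k, (Vᴴ) i k * (M * V) k j = (if h : t k = t j then
          star ((Vb (t j)) ⟨k, h⟩ ⟨i, hij⟩) * ((blk (t j)) * (Vb (t j))) ⟨k, h⟩ ⟨j, rfl⟩
          else 0) := by
        intro k
        rw [Matrix.conjTranspose_apply, hMV k, hVcol (t j) i hij k]
        by_cases hk : t k = t j
        · rw [dif_pos hk, dif_pos hk, dif_pos hk]
        · rw [dif_neg hk, dif_neg hk, dif_neg hk, star_zero, zero_mul]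
      rw [Finset.sum_congr rfl (fun k _ => this k),
        sum_dite_subtype t (fun k => star ((Vb (t j)) k ⟨i, hij⟩) *
          ((blk (t j)) * (Vb (t j))) k ⟨j, rfl⟩)]
      rw [← hVbd (t j), Matrix.mul_assoc, Matrix.mul_apply]
      apply Finset.sum_congr rfl
      intro k _
      rw [Matrix.conjTranspose_apply]
    · rw [dif_neg hij]
      apply Finset.sum_eq_zero
      intro k _
      rw [Matrix.conjTranspose_apply, hMV k, hVcol (t i) i rfl k]
      by_cases hk : t k = t j
      · rw [dif_neg (fun h => hij (h.symm.trans hk)), star_zero, zero_mul]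
      · rw [dif_neg hk, mul_zero]
  have hVu : Vᴴ * V = 1 := by
    ext i j
    rw [Matrix.mul_apply]
    by_cases hij : t i = t j
    · have : ∀ k, (Vᴴ) i k * V k j = (if h : t k = t j then
          star ((Vb (t j)) ⟨k, h⟩ ⟨i, hij⟩) * (Vb (t j)) ⟨k, h⟩ ⟨j, rfl⟩ else 0) := by
        intro k
        rw [Matrix.conjTranspose_apply, hVcol (t j) i hij k, hVcol (t j) j rfl k]
        by_cases hk : t k = t j
        · rw [dif_pos hk, dif_pos hk, dif_pos hk]
        · rw [dif_neg hk, dif_neg hk, dif_neg hk, star_zero, zero_mul]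
      rw [Finset.sum_congr rfl (fun k _ => this k),
        sum_dite_subtype t (fun k => star ((Vb (t j)) k ⟨i, hij⟩) * (Vb (t j)) k ⟨j, rfl⟩)]
      have h1 : ((Vb (t j))ᴴ * (Vb (t j))) ⟨i, hij⟩ ⟨j, rfl⟩ =
          ∑ k : {k // t k = t j}, star ((Vb (t j)) k ⟨i, hij⟩) * (Vb (t j)) k ⟨j, rfl⟩ := by
        rw [Matrix.mul_apply]
        exact Finset.sum_congr rfl fun k _ => by rw [Matrix.conjTranspose_apply]
      rw [← h1, hVbu (t j)]
      by_cases hij' : i = j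
      · subst hij'
        simp
      · rw [Matrix.one_apply_ne (fun h => hij' (congrArg Subtype.val h)),
          Matrix.one_apply_ne hij']
    · have : ∀ k, (Vᴴ) i k * V k j = 0 := by
        intro k
        rw [Matrix.conjTranspose_apply]
        by_cases hk : t k = t j
        · rw [hVblock k i (fun h => hij (h.symm.trans hk)), star_zero, zero_mul]
        · rw [hVblock k j hk, mul_zero]
      rw [Finset.sum_congr rfl (fun k _ => this k), Finset.sum_const_zero,
        Matrix.one_apply_ne (fun h => hij (congrArg t h))]
  refine ⟨V, Matrix.mem_unitaryGroup_iff'.mpr (by rw [Matrix.star_eq_conjTranspose, hVu]), hVblock,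
    fun j => qb (t j) ⟨j, rfl⟩, ?_⟩
  ext i j
  rw [key i j]
  by_cases hij : t i = t j
  · rw [dif_pos hij]
    by_cases hij' : i = j
    · subst hij'
      simp [Matrix.diagonal_apply_eq, Function.comp]
    · rw [Matrix.diagonal_apply_ne _ (fun h => hij' (congrArg Subtype.val h)),
        Matrix.diagonal_apply_ne _ hij']
  · rw [dif_neg hij, Matrix.diagonal_apply_ne _ (fun h => hij (congrArg t h))]

lemma distinctEigs_eq (σ : Matrix n n ℂ) (hσ : σ.IsHermitian) :
    distinctEigs σ = Finset.image hσ.eigenvalues Finset.univ := by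
  rw [distinctEigs, dif_pos hσ]

lemma pinch_eq (σ ρ : Matrix n n ℂ) (hσ : σ.IsHermitian) :
    pinch σ ρ =
      (hσ.eigenvectorUnitary : Matrix n n ℂ) *
        (Matrix.of fun i j => if hσ.eigenvalues i = hσ.eigenvalues j then
          ((hσ.eigenvectorUnitary : Matrix n n ℂ)ᴴ * ρ *
            (hσ.eigenvectorUnitary : Matrix n n ℂ)) i j else 0) *
        (hσ.eigenvectorUnitary : Matrix n n ℂ)ᴴ := by
  classical
  set U : Matrix n n ℂ := (hσ.eigenvectorUnitary : Matrix n n ℂ) with hU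
  set t : n → ℝ := hσ.eigenvalues with ht
  set ρ' : Matrix n n ℂ := Uᴴ * ρ * U with hρ'
  have hσdec : σ = U * Matrix.diagonal (Complex.ofReal ∘ t) * Uᴴ := by
    rw [← Matrix.star_eq_conjTranspose]
    exact hσ.spectral_theorem
  have hUm : U ∈ Matrix.unitaryGroup n ℂ := SetLike.coe_mem _
  have hproj : ∀ μ : ℝ, specProj σ μ =
      U * Matrix.diagonal (Complex.ofReal ∘ (fun x => if x = μ then (1:ℝ) else 0) ∘ t) * Uᴴ := by
    intro μ
    rw [specProj, matFun, hσdec, cfc_conj_diag U hUm t]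
  rw [pinch, distinctEigs_eq σ hσ]
  have hterm : ∀ μ : ℝ, specProj σ μ * ρ * specProj σ μ =
      U * (Matrix.diagonal (Complex.ofReal ∘ (fun x => if x = μ then (1:ℝ) else 0) ∘ t) * ρ' *
        Matrix.diagonal (Complex.ofReal ∘ (fun x => if x = μ then (1:ℝ) else 0) ∘ t)) * Uᴴ := by
    intro μ
    rw [hproj μ, hρ']
    simp only [Matrix.mul_assoc]
  rw [Finset.sum_congr rfl (fun μ _ => hterm μ)]
  rw [← Finset.sum_mul, ← Finset.mul_sum]
  congr 2
  ext i j
  rw [Matrix.sum_apply]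
  simp only [Matrix.mul_diagonal, Matrix.diagonal_mul, Matrix.of_apply, Function.comp_apply]
  by_cases h : t i = t j
  · rw [if_pos h]
    rw [Finset.sum_eq_single_of_mem (t i) (Finset.mem_image_of_mem t (Finset.mem_univ i))]
    · rw [if_pos rfl, if_pos h.symm]
      push_cast
      ring
    · intro b _ hb
      rw [if_neg (fun hc => hb hc.symm)]
      push_cast
      ring
  · rw [if_neg h]
    apply Finset.sum_eq_zero
    intro μ _
    by_cases hi : t i = μ
    · rw [if_pos hi, if_neg (fun hc : t j = μ => h (hi.trans hc.symm))]
      push_cast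
      ring
    · rw [if_neg hi]
      push_cast
      ring

lemma diag_conj_entry (v : n → ℝ) (C : Matrix n n ℂ) (j : n) :
    (Cᴴ * Matrix.diagonal (Complex.ofReal ∘ v) * C) j j =
      Complex.ofReal (∑ k, v k * Complex.normSq (C k j)) := by
  rw [Matrix.mul_assoc, Matrix.mul_apply, Complex.ofReal_sum]
  apply Finset.sum_congr rfl
  intro k _
  rw [Matrix.conjTranspose_apply, Matrix.diagonal_mul, Function.comp_apply, RCLike.star_def]
  have h : (starRingEnd ℂ) (C k j) * ((v k : ℂ) * C k j) =
      (v k : ℂ) * (C k j * (starRingEnd ℂ) (C k j)) := by ring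
  rw [h, Complex.mul_conj, Complex.ofReal_mul]

lemma col_normSq_sum (C : Matrix n n ℂ) (hC : C ∈ Matrix.unitaryGroup n ℂ) (j : n) :
    ∑ k, Complex.normSq (C k j) = 1 := by
  have h1 : Cᴴ * C = 1 := by
    rw [← Matrix.star_eq_conjTranspose]
    exact Matrix.mem_unitaryGroup_iff'.mp hC
  have h2 : (Cᴴ * C) j j = 1 := by rw [h1, Matrix.one_apply_eq]
  rw [Matrix.mul_apply] at h2
  have h3 : ∀ k, (Cᴴ) j k * C k j = Complex.ofReal (Complex.normSq (C k j)) := by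
    intro k
    rw [Matrix.conjTranspose_apply, RCLike.star_def, mul_comm, Complex.mul_conj]
  rw [Finset.sum_congr rfl (fun k _ => h3 k), ← Complex.ofReal_sum] at h2
  exact_mod_cast h2

lemma quad_entry (P : Matrix n n ℂ) (W : Matrix n n ℂ) (j : n) :
    (Wᴴ * P * W) j j = dotProduct (star (fun k => W k j)) (P *ᵥ (fun k => W k j)) := by
  rw [Matrix.mul_assoc, Matrix.mul_apply, dotProduct]
  apply Finset.sum_congr rfl
  intro k _
  rw [Matrix.conjTranspose_apply, Matrix.mul_apply, Matrix.mulVec, dotProduct]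
  simp only [Pi.star_apply, RCLike.star_def]

lemma quad_re_pos (P : Matrix n n ℂ) (hP : P.PosDef) (W : Matrix n n ℂ)
    (hW : W ∈ Matrix.unitaryGroup n ℂ) (j : n) : 0 < ((Wᴴ * P * W) j j).re := by
  have hx : (fun k => W k j) ≠ 0 := by
    intro h0
    have h1 := col_normSq_sum W hW j
    rw [Finset.sum_congr rfl (fun k _ => by
      rw [show W k j = 0 from congrFun h0 k, Complex.normSq_zero])] at h1
    simp at h1
  have hpos := hP.dotProduct_mulVec_pos hx
  rw [quad_entry]
  rw [Complex.lt_def] at hpos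
  simpa using hpos.1

lemma jensen_diag (P : Matrix n n ℂ) (hP : P.PosDef) (W : Matrix n n ℂ)
    (hW : W ∈ Matrix.unitaryGroup n ℂ) (α : ℝ) (hα : 1 ≤ α) (j : n) :
    ((Wᴴ * P * W) j j).re ^ α ≤ ((Wᴴ * cfc (fun x : ℝ => x ^ α) P * W) j j).re := by
  have hPH : P.IsHermitian := hP.1
  set Uρ : Matrix n n ℂ := (hPH.eigenvectorUnitary : Matrix n n ℂ) with hUρ
  set r : n → ℝ := hPH.eigenvalues with hr
  have hUρm : Uρ ∈ Matrix.unitaryGroup n ℂ := SetLike.coe_mem _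
  have hPdec : P = Uρ * Matrix.diagonal (Complex.ofReal ∘ r) * Uρᴴ := by
    rw [← Matrix.star_eq_conjTranspose]
    exact hPH.spectral_theorem
  set C : Matrix n n ℂ := Uρᴴ * W with hCdef
  have hCm : C ∈ Matrix.unitaryGroup n ℂ := by
    rw [hCdef, ← Matrix.star_eq_conjTranspose]
    exact mul_mem (Unitary.star_mem hUρm) hW
  have key : ∀ v : n → ℝ,
      Wᴴ * (Uρ * Matrix.diagonal (Complex.ofReal ∘ v) * Uρᴴ) * W =
        Cᴴ * Matrix.diagonal (Complex.ofReal ∘ v) * C := by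
    intro v
    rw [hCdef, Matrix.conjTranspose_mul, Matrix.conjTranspose_conjTranspose]
    simp only [Matrix.mul_assoc]
  have h1 : ((Wᴴ * P * W) j j).re = ∑ k, Complex.normSq (C k j) * r k := by
    conv_lhs => rw [hPdec, key r, diag_conj_entry]
    rw [Complex.ofReal_re]
    exact Finset.sum_congr rfl fun k _ => mul_comm _ _
  have h2 : ((Wᴴ * cfc (fun x : ℝ => x ^ α) P * W) j j).re =
      ∑ k, Complex.normSq (C k j) * (r k ^ α) := by
    conv_lhs => rw [hPdec, cfc_conj_diag Uρ hUρm r, key ((fun x : ℝ => x ^ α) ∘ r),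
      diag_conj_entry]
    rw [Complex.ofReal_re]
    exact Finset.sum_congr rfl fun k _ => mul_comm _ _
  rw [h1, h2]
  have hJ := (convexOn_rpow hα).map_sum_le (t := Finset.univ)
    (w := fun k => Complex.normSq (C k j)) (p := r)
    (fun k _ => Complex.normSq_nonneg _) (col_normSq_sum C hCm j)
    (fun k _ => (hP.eigenvalues_pos k).le)
  simpa only [smul_eq_mul] using hJ

lemma conj_offblock_zero (t : n → ℝ) (V N : Matrix n n ℂ)
    (hVb : ∀ i j, t i ≠ t j → V i j = 0) (hN : ∀ k l, t k = t l → N k l = 0) (j : n) :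
    (Vᴴ * N * V) j j = 0 := by
  rw [Matrix.mul_assoc, Matrix.mul_apply]
  apply Finset.sum_eq_zero
  intro k _
  by_cases hk : t k = t j
  · have : (N * V) k j = 0 := by
      rw [Matrix.mul_apply]
      apply Finset.sum_eq_zero
      intro l _
      by_cases hl : t l = t j
      · rw [hN k l (hk.trans hl.symm), zero_mul]
      · rw [hVb l j hl, mul_zero]
    rw [this, mul_zero]
  · rw [Matrix.conjTranspose_apply, hVb k j hk, star_zero, zero_mul]

end Helpers

/-- Pinching decreases the Petz Rényi entropy. -/
theorem petzRenyi_pinching_le {d : ℕ} (hd : 1 ≤ d)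
    (ρ σ : Matrix (Fin d) (Fin d) ℂ)
    (hρ : IsFaithfulState ρ) (hσ : IsFaithfulState σ) (s : ℝ) (hs : 0 < s) :
    petzRenyi s (pinch σ ρ) σ ≤ petzRenyi s ρ σ := by
  classical
  obtain ⟨hρpd, -⟩ := hρ
  obtain ⟨hσpd, -⟩ := hσ
  have hσH : σ.IsHermitian := hσpd.1
  have hρH : ρ.IsHermitian := hρpd.1
  set U : Matrix (Fin d) (Fin d) ℂ := (hσH.eigenvectorUnitary : Matrix (Fin d) (Fin d) ℂ)
    with hUdef
  set t : Fin d → ℝ := hσH.eigenvalues with htdef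
  have hUm : U ∈ Matrix.unitaryGroup (Fin d) ℂ := SetLike.coe_mem _
  set ρ' : Matrix (Fin d) (Fin d) ℂ := Uᴴ * ρ * U with hρ'def
  set M : Matrix (Fin d) (Fin d) ℂ :=
    Matrix.of (fun i j => if t i = t j then ρ' i j else 0) with hMdef
  have hpinch : pinch σ ρ = U * M * Uᴴ := pinch_eq σ ρ hσH
  have hρ'H : ρ'.IsHermitian := by
    rw [hρ'def, Matrix.IsHermitian, Matrix.conjTranspose_mul, Matrix.conjTranspose_mul,
      Matrix.conjTranspose_conjTranspose, hρH.eq, Matrix.mul_assoc]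
  have hρ'entry : ∀ i j, (starRingEnd ℂ) (ρ' j i) = ρ' i j := by
    intro i j
    have := congrFun (congrFun hρ'H.eq i) j
    rwa [Matrix.conjTranspose_apply, RCLike.star_def] at this
  have hM : M.IsHermitian := by
    ext i j
    rw [Matrix.conjTranspose_apply, hMdef]
    simp only [Matrix.of_apply]
    by_cases h : t i = t j
    · rw [if_pos h, if_pos h.symm, RCLike.star_def, hρ'entry]
    · rw [if_neg h, if_neg (fun hc => h hc.symm), star_zero]
  have hblock : ∀ i j, t i ≠ t j → M i j = 0 := by
    intro i j h
    rw [hMdef]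
    simp only [Matrix.of_apply]
    rw [if_neg h]
  obtain ⟨V, hVm, hVblock, q, hVdiag⟩ := block_diagonalize M hM t hblock
  have hV1 : Vᴴ * V = 1 := by
    rw [← Matrix.star_eq_conjTranspose]; exact Matrix.mem_unitaryGroup_iff'.mp hVm
  have hV2 : V * Vᴴ = 1 := by
    rw [← Matrix.star_eq_conjTranspose]; exact Matrix.mem_unitaryGroup_iff.mp hVm
  have hMdec : M = V * Matrix.diagonal (Complex.ofReal ∘ q) * Vᴴ := by
    rw [← hVdiag]
    have : V * (Vᴴ * M * V) * Vᴴ = (V * Vᴴ) * M * (V * Vᴴ) := by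
      simp only [Matrix.mul_assoc]
    rw [this, hV2, Matrix.one_mul, Matrix.mul_one]
  set W : Matrix (Fin d) (Fin d) ℂ := U * V with hWdef
  have hWm : W ∈ Matrix.unitaryGroup (Fin d) ℂ := mul_mem hUm hVm
  have hWH : Wᴴ = Vᴴ * Uᴴ := Matrix.conjTranspose_mul U V
  have hW1 : Wᴴ * W = 1 := by
    rw [← Matrix.star_eq_conjTranspose]; exact Matrix.mem_unitaryGroup_iff'.mp hWm
  have hκdec : pinch σ ρ = W * Matrix.diagonal (Complex.ofReal ∘ q) * Wᴴ := by
    rw [hpinch, hMdec, hWdef, hWH]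
    simp only [Matrix.mul_assoc]
  have hcommV : V * Matrix.diagonal (Complex.ofReal ∘ t) =
      Matrix.diagonal (Complex.ofReal ∘ t) * V := by
    ext i j
    rw [Matrix.mul_diagonal, Matrix.diagonal_mul]
    by_cases h : t i = t j
    · rw [Function.comp_apply, Function.comp_apply, h, mul_comm]
    · rw [hVblock i j h, mul_zero, zero_mul]
  have hσdecW : σ = W * Matrix.diagonal (Complex.ofReal ∘ t) * Wᴴ := by
    have h0 : σ = U * Matrix.diagonal (Complex.ofReal ∘ t) * Uᴴ := by
      rw [← Matrix.star_eq_conjTranspose]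
      exact hσH.spectral_theorem
    have h1 : V * Matrix.diagonal (Complex.ofReal ∘ t) * Vᴴ =
        Matrix.diagonal (Complex.ofReal ∘ t) := by
      rw [hcommV, Matrix.mul_assoc, hV2, Matrix.mul_one]
    rw [hWdef, hWH]
    conv_rhs => rw [show U * V * Matrix.diagonal (Complex.ofReal ∘ t) * (Vᴴ * Uᴴ) =
      U * (V * Matrix.diagonal (Complex.ofReal ∘ t) * Vᴴ) * Uᴴ by simp only [Matrix.mul_assoc],
      h1]
    exact h0
  have hqval : ∀ j, (Complex.ofReal (q j)) = (Wᴴ * ρ * W) j j := by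
    intro j
    have h1 : (Vᴴ * M * V) j j = Complex.ofReal (q j) := by
      rw [hVdiag, Matrix.diagonal_apply_eq, Function.comp_apply]
    have h2 : (Vᴴ * (ρ' - M) * V) j j = 0 := by
      apply conj_offblock_zero t V (ρ' - M) hVblock
      intro k l h
      rw [Matrix.sub_apply, hMdef]
      simp only [Matrix.of_apply]
      rw [if_pos h, sub_self]
    have h3 : Wᴴ * ρ * W = Vᴴ * ρ' * V := by
      rw [hWdef, hWH, hρ'def]
      simp only [Matrix.mul_assoc]
    have h4 : Vᴴ * ρ' * V = Vᴴ * M * V + Vᴴ * (ρ' - M) * V := by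
      rw [Matrix.mul_sub, Matrix.sub_mul]
      abel
    rw [h3, h4, Matrix.add_apply, h1, h2, add_zero]
  have hqpos : ∀ j, 0 < q j := by
    intro j
    have h := quad_re_pos ρ hρpd W hWm j
    rw [← hqval j, Complex.ofReal_re] at h
    exact h
  have htpos : ∀ j, 0 < t j := hσpd.eigenvalues_pos
  have hα : (1:ℝ) ≤ 1 + s := by linarith
  have hκrpow : matRpow (pinch σ ρ) (1 + s) =
      W * Matrix.diagonal (Complex.ofReal ∘ (fun x : ℝ => x ^ (1 + s)) ∘ q) * Wᴴ := by
    rw [matRpow, matFun, hκdec, cfc_conj_diag W hWm q]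
  have hσrpow : matRpow σ (-s) =
      W * Matrix.diagonal (Complex.ofReal ∘ (fun x : ℝ => x ^ (-s)) ∘ t) * Wᴴ := by
    rw [matRpow, matFun]
    conv_lhs => rw [hσdecW]
    rw [cfc_conj_diag W hWm t]
  have hLHS : (matRpow (pinch σ ρ) (1 + s) * matRpow σ (-s)).trace.re =
      ∑ j, q j ^ (1 + s) * t j ^ (-s) := by
    rw [hκrpow, hσrpow]
    have hprod : W * Matrix.diagonal (Complex.ofReal ∘ (fun x : ℝ => x ^ (1 + s)) ∘ q) * Wᴴ *
        (W * Matrix.diagonal (Complex.ofReal ∘ (fun x : ℝ => x ^ (-s)) ∘ t) * Wᴴ) =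
        W * (Matrix.diagonal (Complex.ofReal ∘ (fun x : ℝ => x ^ (1 + s)) ∘ q) *
          Matrix.diagonal (Complex.ofReal ∘ (fun x : ℝ => x ^ (-s)) ∘ t)) * Wᴴ := by
      calc W * Matrix.diagonal (Complex.ofReal ∘ (fun x : ℝ => x ^ (1 + s)) ∘ q) * Wᴴ *
          (W * Matrix.diagonal (Complex.ofReal ∘ (fun x : ℝ => x ^ (-s)) ∘ t) * Wᴴ)
          = W * Matrix.diagonal (Complex.ofReal ∘ (fun x : ℝ => x ^ (1 + s)) ∘ q) * (Wᴴ * W) *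
            (Matrix.diagonal (Complex.ofReal ∘ (fun x : ℝ => x ^ (-s)) ∘ t) * Wᴴ) := by
            simp only [Matrix.mul_assoc]
        _ = _ := by rw [hW1, Matrix.mul_one]; simp only [Matrix.mul_assoc]
    rw [hprod, Matrix.diagonal_mul_diagonal, Matrix.trace_mul_cycle,
      hW1, Matrix.one_mul, Matrix.trace_diagonal]
    rw [Complex.re_sum]
    apply Finset.sum_congr rfl
    intro j _
    simp only [Function.comp_apply, ← Complex.ofReal_mul, Complex.ofReal_re]
  have hRHS : (matRpow ρ (1 + s) * matRpow σ (-s)).trace.re =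
      ∑ j, ((Wᴴ * matRpow ρ (1 + s) * W) j j).re * t j ^ (-s) := by
    rw [hσrpow]
    have h5 : matRpow ρ (1 + s) *
        (W * Matrix.diagonal (Complex.ofReal ∘ (fun x : ℝ => x ^ (-s)) ∘ t) * Wᴴ) =
        (matRpow ρ (1 + s) * W * Matrix.diagonal (Complex.ofReal ∘ (fun x : ℝ => x ^ (-s)) ∘ t))
          * Wᴴ := by
      simp only [Matrix.mul_assoc]
    rw [h5, Matrix.trace_mul_comm, ← Matrix.mul_assoc, ← Matrix.mul_assoc]
    rw [Matrix.trace]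
    rw [Complex.re_sum]
    apply Finset.sum_congr rfl
    intro j _
    rw [Matrix.diag_apply, Matrix.mul_diagonal, Function.comp_apply]
    rw [Complex.mul_re, Complex.ofReal_re, Complex.ofReal_im, mul_zero, sub_zero]
    rfl
  have hle : ∑ j, q j ^ (1 + s) * t j ^ (-s) ≤
      ∑ j, ((Wᴴ * matRpow ρ (1 + s) * W) j j).re * t j ^ (-s) := by
    apply Finset.sum_le_sum
    intro j _
    apply mul_le_mul_of_nonneg_right _ (Real.rpow_nonneg (htpos j).le _)
    have hqj : q j = ((Wᴴ * ρ * W) j j).re := by rw [← hqval j, Complex.ofReal_re]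
    rw [hqj]
    exact jensen_diag ρ hρpd W hWm (1 + s) hα j
  have hpos : 0 < ∑ j, q j ^ (1 + s) * t j ^ (-s) := by
    have : Nonempty (Fin d) := ⟨⟨0, hd⟩⟩
    apply Finset.sum_pos
    · intro j _
      exact mul_pos (Real.rpow_pos_of_pos (hqpos j) _) (Real.rpow_pos_of_pos (htpos j) _)
    · exact Finset.univ_nonempty
  rw [petzRenyi, petzRenyi, hLHS, hRHS]
  apply mul_le_mul_of_nonneg_left _ (inv_nonneg.mpr hs.le)
  exact Real.log_le_log hpos hle


end
end

section
/- Relative entropy to a pinched state is an entropy gain bounded by the logarithm of the number of projections: Let c_1, …, c_m be nonzero orthogonal projections in M_d(ℂ) (each c_i Hermitian with c_i² = c_i, c_i c_j = 0 for i ≠ j) with c_1 + ⋯ + c_m = I, let κ_C(X) := Σ_{i=1}^m c_i X c_i, and let ρ be a faithful state. Then D(ρ||κ_C(ρ)) = H(κ_C(ρ)) − H(ρ) ≤ log m. -/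
open Matrix Filter
open scoped Kronecker ComplexOrder

noncomputable section

section sqrtAux
open scoped MatrixOrder

/-- A positive semidefinite square root. -/
noncomputable def Matrix.PosSemidef.sqrt {n : Type*} [Fintype n] [DecidableEq n]
    {M : Matrix n n ℂ} (_hM : M.PosSemidef) : Matrix n n ℂ :=
  CFC.sqrt M

lemma Matrix.PosSemidef.posSemidef_sqrt {n : Type*} [Fintype n] [DecidableEq n]
    {M : Matrix n n ℂ} (hM : M.PosSemidef) : hM.sqrt.PosSemidef :=
  Matrix.nonneg_iff_posSemidef.mp (CFC.sqrt_nonneg M)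

lemma Matrix.PosSemidef.sqrt_mul_self {n : Type*} [Fintype n] [DecidableEq n]
    {M : Matrix n n ℂ} (hM : M.PosSemidef) : hM.sqrt * hM.sqrt = M :=
  CFC.sqrt_mul_sqrt_self M (Matrix.nonneg_iff_posSemidef.mpr hM)

end sqrtAux

namespace PinchProofAux

variable {n : Type*} [Fintype n] [DecidableEq n]

section cfcBasics
variable {A B : Matrix n n ℂ} (hA : A.IsHermitian) (hB : B.IsHermitian)

lemma unit_star_mul : (star (hA.eigenvectorUnitary : Matrix n n ℂ)) *
    (hA.eigenvectorUnitary : Matrix n n ℂ) = 1 :=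
  mem_unitaryGroup_iff'.mp hA.eigenvectorUnitary.2

lemma unit_mul_star : (hA.eigenvectorUnitary : Matrix n n ℂ) *
    (star (hA.eigenvectorUnitary : Matrix n n ℂ)) = 1 :=
  mem_unitaryGroup_iff.mp hA.eigenvectorUnitary.2

lemma myCfc_mul (f g : ℝ → ℝ) :
    hA.cfc f * hA.cfc g = hA.cfc (fun x => f x * g x) := by
  unfold Matrix.IsHermitian.cfc
  simp only [Unitary.conjStarAlgAut_apply, Unitary.coe_star]
  have h1 := unit_star_mul hA
  set U : Matrix n n ℂ := (hA.eigenvectorUnitary : Matrix n n ℂ)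
  set Df : Matrix n n ℂ := diagonal (RCLike.ofReal ∘ f ∘ hA.eigenvalues)
  set Dg : Matrix n n ℂ := diagonal (RCLike.ofReal ∘ g ∘ hA.eigenvalues)
  have : Df * Dg = diagonal (RCLike.ofReal ∘ (fun x => f x * g x) ∘ hA.eigenvalues) := by
    rw [Matrix.diagonal_mul_diagonal]
    have : (fun i => (RCLike.ofReal (f (hA.eigenvalues i)) : ℂ) *
        RCLike.ofReal (g (hA.eigenvalues i)))
        = (RCLike.ofReal ∘ (fun x => f x * g x) ∘ hA.eigenvalues) := by
      funext i
      simp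
    rw [← this]
    rfl
  calc U * Df * star U * (U * Dg * star U)
      = U * (Df * ((star U * U) * Dg)) * star U := by
        simp only [Matrix.mul_assoc]
    _ = U * (Df * Dg) * star U := by rw [h1, Matrix.one_mul]
    _ = _ := by rw [this]

lemma myCfc_id : hA.cfc (fun x => x) = A := by
  unfold Matrix.IsHermitian.cfc
  exact (hA.spectral_theorem).symm

lemma myCfc_congr {f g : ℝ → ℝ} (h : ∀ i, f (hA.eigenvalues i) = g (hA.eigenvalues i)) :
    hA.cfc f = hA.cfc g := by
  unfold Matrix.IsHermitian.cfc
  have : (RCLike.ofReal ∘ f ∘ hA.eigenvalues : n → ℂ) = (RCLike.ofReal ∘ g ∘ hA.eigenvalues) := by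
    funext i
    simp [Function.comp, h i]
  rw [this]

lemma myCfc_one : hA.cfc (fun _ => 1) = 1 := by
  unfold Matrix.IsHermitian.cfc
  simp only [Unitary.conjStarAlgAut_apply, Unitary.coe_star]
  have : diagonal (RCLike.ofReal ∘ (fun _ => (1:ℝ)) ∘ hA.eigenvalues) = (1 : Matrix n n ℂ) := by
    have : (RCLike.ofReal ∘ (fun _ => (1:ℝ)) ∘ hA.eigenvalues : n → ℂ) = (fun _ => 1) := by
      funext i; simp
    rw [this, Matrix.diagonal_one]
  rw [this, Matrix.mul_one, unit_mul_star hA]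

lemma myCfc_herm (f : ℝ → ℝ) : (hA.cfc f).IsHermitian := by
  unfold Matrix.IsHermitian.cfc
  simp only [Unitary.conjStarAlgAut_apply, Unitary.coe_star]
  unfold Matrix.IsHermitian
  simp only [Matrix.conjTranspose_mul, Matrix.conjTranspose_conjTranspose,
    Matrix.star_eq_conjTranspose]
  rw [Matrix.diagonal_conjTranspose]
  have : star (RCLike.ofReal ∘ f ∘ hA.eigenvalues : n → ℂ) =
      (RCLike.ofReal ∘ f ∘ hA.eigenvalues : n → ℂ) := by
    funext i
    simp [Pi.star_apply, RCLike.star_def]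
  rw [this, Matrix.mul_assoc]

lemma trace_myCfc (f : ℝ → ℝ) :
    (hA.cfc f).trace = ((∑ j, f (hA.eigenvalues j) : ℝ) : ℂ) := by
  unfold Matrix.IsHermitian.cfc
  simp only [Unitary.conjStarAlgAut_apply, Unitary.coe_star]
  rw [Matrix.trace_mul_cycle, unit_star_mul hA, Matrix.one_mul, Matrix.trace_diagonal]
  push_cast
  rfl

lemma trace_diag_conj (a b : n → ℂ) (T : Matrix n n ℂ) :
    (diagonal a * (T * (diagonal b * star T))).trace
      = ∑ j, ∑ k, a j * b k * (T j k * star (T j k)) := by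
  rw [Matrix.trace]
  congr 1
  funext j
  rw [Matrix.diag_apply, Matrix.diagonal_mul, Matrix.mul_apply, Finset.mul_sum]
  congr 1
  funext k
  rw [Matrix.mul_apply']
  simp only [Matrix.star_eq_conjTranspose]
  rw [diagonal_dotProduct]
  rw [Matrix.conjTranspose_apply]
  ring

lemma rowsum_normSq {T : Matrix n n ℂ} (hT : T ∈ Matrix.unitaryGroup n ℂ) (j : n) :
    ∑ k, Complex.normSq (T j k) = 1 := by
  have h := Matrix.mem_unitaryGroup_iff.mp hT
  have h2 : (T * star T) j j = (1 : Matrix n n ℂ) j j := by rw [h]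
  rw [Matrix.mul_apply, Matrix.one_apply_eq] at h2
  have h3 : ∀ k, T j k * (star T) k j = ((Complex.normSq (T j k) : ℝ) : ℂ) := by
    intro k
    rw [Matrix.star_eq_conjTranspose, Matrix.conjTranspose_apply, Complex.star_def,
      Complex.mul_conj]
  rw [Finset.sum_congr rfl (fun k _ => h3 k)] at h2
  rw [← Complex.ofReal_sum] at h2
  exact_mod_cast h2

lemma trace_myCfc_mul_myCfc (f g : ℝ → ℝ) :
    ((hA.cfc f) * (hB.cfc g)).trace =
      ((∑ j, ∑ k, f (hA.eigenvalues j) * g (hB.eigenvalues k) *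
        Complex.normSq (((star (hA.eigenvectorUnitary : Matrix n n ℂ)) *
          (hB.eigenvectorUnitary : Matrix n n ℂ)) j k) : ℝ) : ℂ) := by
  unfold Matrix.IsHermitian.cfc
  simp only [Unitary.conjStarAlgAut_apply, Unitary.coe_star]
  set U : Matrix n n ℂ := (hA.eigenvectorUnitary : Matrix n n ℂ) with hU
  set V : Matrix n n ℂ := (hB.eigenvectorUnitary : Matrix n n ℂ) with hV
  set T : Matrix n n ℂ := star U * V with hT
  set Df : Matrix n n ℂ := diagonal (RCLike.ofReal ∘ f ∘ hA.eigenvalues) with hDf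
  set Dg : Matrix n n ℂ := diagonal (RCLike.ofReal ∘ g ∘ hB.eigenvalues) with hDg
  have key1 : U * Df * star U * (V * Dg * star V)
      = U * (Df * (star U * (V * (Dg * star V)))) := by
    simp only [Matrix.mul_assoc]
  rw [key1, Matrix.trace_mul_comm]
  have key2 : (Df * (star U * (V * (Dg * star V)))) * U = Df * (T * (Dg * star T)) := by
    simp only [hT, Matrix.star_mul, star_star, Matrix.mul_assoc]
  rw [key2, trace_diag_conj]
  rw [Complex.ofReal_sum]
  congr 1
  funext j
  rw [Complex.ofReal_sum]
  congr 1
  funext k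
  simp only [hDf, hDg, Function.comp_apply, Complex.star_def, Complex.mul_conj]
  norm_cast
  ring_nf
  exact (Complex.ofReal_mul _ _).symm

end cfcBasics

lemma commute_aeval {X A : Matrix n n ℂ} (h : Commute X A) (p : Polynomial ℝ) :
    Commute X (Polynomial.aeval A p) := by
  induction p using Polynomial.induction_on with
  | C a =>
      rw [Polynomial.aeval_C, Algebra.algebraMap_eq_smul_one]
      exact (Commute.one_right X).smul_right a
  | add p q hp hq => simpa [_root_.map_add] using hp.add_right hq
  | monomial m a hm =>
      rw [_root_.map_mul, Polynomial.aeval_C, map_pow, Polynomial.aeval_X,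
        Algebra.algebraMap_eq_smul_one]
      exact ((Commute.one_right X).smul_right a).mul_right (h.pow_right (m + 1))

lemma commute_cfc {X A : Matrix n n ℂ} (hA : A.IsHermitian) (h : Commute X A) (f : ℝ → ℝ) :
    Commute X (cfc f A) := by
  classical
  set s : Finset ℝ := Finset.image hA.eigenvalues Finset.univ with hs
  set p : Polynomial ℝ := Lagrange.interpolate s id f with hp
  have hsp : (spectrum ℝ A) = Set.range hA.eigenvalues := hA.spectrum_real_eq_range_eigenvalues
  have hcongr : cfc f A = cfc (fun x => p.eval x) A := by
    apply cfc_congr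
    intro x hx
    rw [hsp] at hx
    obtain ⟨i, rfl⟩ := hx
    have hmem : hA.eigenvalues i ∈ s := Finset.mem_image_of_mem _ (Finset.mem_univ i)
    exact (Lagrange.eval_interpolate_at_node f (Set.injOn_id _) hmem).symm
  rw [hcongr]
  have hsa : IsSelfAdjoint A := hA
  rw [cfc_polynomial p A]
  exact commute_aeval h p

lemma psd_trace_re_nonneg {M : Matrix n n ℂ} (hM : M.PosSemidef) : 0 ≤ M.trace.re := by
  have h : ∀ i, 0 ≤ (M i i).re := by
    intro i
    have h0 := hM.re_dotProduct_nonneg (Pi.single i 1)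
    simpa [Matrix.mulVec_single, dotProduct, Pi.single_apply, Finset.sum_ite_eq,
      RCLike.re] using h0
  rw [Matrix.trace]
  rw [Complex.re_sum]
  exact Finset.sum_nonneg fun i _ => h i

lemma psd_trace_mul_re_nonneg {M N : Matrix n n ℂ} (hM : M.PosSemidef) (hN : N.PosSemidef) :
    0 ≤ (M * N).trace.re := by
  have hS := hM.posSemidef_sqrt
  have h1 : M * N = hM.sqrt * (hM.sqrt * N) := by
    rw [← Matrix.mul_assoc, hM.sqrt_mul_self]
  rw [h1, Matrix.trace_mul_comm, Matrix.mul_assoc]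
  have hpsd := hN.conjTranspose_mul_mul_same (B := hM.sqrt)
  rw [hS.isHermitian] at hpsd
  rw [← Matrix.mul_assoc]
  exact psd_trace_re_nonneg hpsd

lemma sum_mulVec' {m : ℕ} (c : Fin m → Matrix n n ℂ) (x : n → ℂ) :
    (∑ i, c i) *ᵥ x = ∑ i, (c i *ᵥ x) := by
  funext k
  simp [Matrix.mulVec, dotProduct, Matrix.sum_apply, Finset.sum_mul]
  rw [Finset.sum_comm]

lemma mulVec_sum' {m : ℕ} (S : Matrix n n ℂ) (y : Fin m → (n → ℂ)) :
    S *ᵥ (∑ i, y i) = ∑ i, S *ᵥ (y i) := by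
  funext k
  simp [Matrix.mulVec, dotProduct, Finset.sum_apply, Finset.mul_sum]
  rw [Finset.sum_comm]

lemma dot_sum (v : n → ℂ) {m : ℕ} (w : Fin m → n → ℂ) :
    dotProduct v (∑ i, w i) = ∑ i, dotProduct v (w i) := by
  simp [dotProduct, Finset.sum_apply, Finset.mul_sum]
  rw [Finset.sum_comm]

lemma dot_conj (A B : Matrix n n ℂ) (x : n → ℂ) :
    dotProduct (star x) ((Bᴴ * A * B) *ᵥ x)
      = dotProduct (star (B *ᵥ x)) (A *ᵥ (B *ᵥ x)) := by
  rw [star_mulVec, ← Matrix.mulVec_mulVec, ← Matrix.mulVec_mulVec, Matrix.dotProduct_mulVec]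

lemma dot_self_eq (z : n → ℂ) :
    dotProduct (star z) z = ((∑ k, Complex.normSq (z k) : ℝ) : ℂ) := by
  rw [dotProduct, Complex.ofReal_sum]
  congr 1
  funext k
  rw [Pi.star_apply, Complex.star_def, mul_comm, Complex.mul_conj]

lemma normSq_sum_le {m : ℕ} (u : Fin m → (n → ℂ)) :
    ∑ k, Complex.normSq ((∑ i, u i) k) ≤ (m : ℝ) * ∑ i, ∑ k, Complex.normSq (u i k) := by
  let v : Fin m → EuclideanSpace ℂ n := fun i => (WithLp.equiv 2 _).symm (u i)
  have hnorm : ∀ (w : n → ℂ), ∑ k, Complex.normSq (w k)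
      = ‖((WithLp.equiv 2 (n → ℂ)).symm w : EuclideanSpace ℂ n)‖ ^ 2 := by
    intro w
    rw [EuclideanSpace.norm_eq, Real.sq_sqrt (by positivity)]
    congr 1
    funext k
    rw [Complex.normSq_eq_norm_sq]
    rfl
  have hsumv : ((WithLp.equiv 2 (n → ℂ)).symm (∑ i, u i) : EuclideanSpace ℂ n) = ∑ i, v i := by
    exact WithLp.toLp_sum (p := 2) (V := n → ℂ) _ _
  rw [hnorm, hsumv]
  have h1 : ‖∑ i, v i‖ ≤ ∑ i, ‖v i‖ := norm_sum_le _ _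
  have h2 : ‖∑ i, v i‖ ^ 2 ≤ (∑ i, ‖v i‖) ^ 2 := by
    apply pow_le_pow_left₀ (norm_nonneg _) h1
  refine h2.trans ?_
  have h3 := sq_sum_le_card_mul_sum_sq (s := (Finset.univ : Finset (Fin m))) (f := fun i => ‖v i‖)
  simp only [Finset.card_univ, Fintype.card_fin] at h3
  refine h3.trans_eq ?_
  congr 1
  exact Finset.sum_congr rfl fun i _ => (hnorm (u i)).symm

lemma pinch_psd {m : ℕ} (c : Fin m → Matrix n n ℂ)
    (hherm : ∀ i, (c i).IsHermitian) (hsum : ∑ i, c i = 1)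
    {ρ : Matrix n n ℂ} (hρ : ρ.PosSemidef) :
    PosSemidef ((m : ℂ) • (∑ i, c i * ρ * c i) - ρ) := by
  have hσH : (∑ i, c i * ρ * c i).IsHermitian := by
    unfold Matrix.IsHermitian
    rw [Matrix.conjTranspose_sum]
    refine Finset.sum_congr rfl fun i _ => ?_
    rw [Matrix.conjTranspose_mul, Matrix.conjTranspose_mul, hherm i, hρ.1, ← Matrix.mul_assoc]
  refine PosSemidef.of_dotProduct_mulVec_nonneg ?_ ?_
  · have h1 : ((m : ℂ) • (∑ i, c i * ρ * c i) - ρ)ᴴ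
        = (m : ℂ) • (∑ i, c i * ρ * c i)ᴴ - ρᴴ := by
      rw [Matrix.conjTranspose_sub, Matrix.conjTranspose_smul, star_natCast]
    rw [Matrix.IsHermitian, h1, hσH, hρ.1]
  · intro x
    obtain ⟨S, hSpsd, hSS⟩ : ∃ S : Matrix n n ℂ, S.PosSemidef ∧ S * S = ρ :=
      ⟨hρ.sqrt, hρ.posSemidef_sqrt, hρ.sqrt_mul_self⟩
    set u : Fin m → (n → ℂ) := fun i => S *ᵥ (c i *ᵥ x) with hu
    have hterm : ∀ i, dotProduct (star x) ((c i * ρ * c i) *ᵥ x)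
        = ((∑ k, Complex.normSq (u i k) : ℝ) : ℂ) := by
      intro i
      have e1 : c i * ρ * c i = (c i)ᴴ * ρ * (c i) := by rw [hherm i]
      rw [e1, dot_conj]
      have e2 : ρ *ᵥ (c i *ᵥ x) = S *ᵥ (u i) := by
        show ρ *ᵥ (c i *ᵥ x) = S *ᵥ (S *ᵥ (c i *ᵥ x))
        conv_rhs => rw [Matrix.mulVec_mulVec, hSS]
      rw [e2]
      have e2' : star (u i) = star (c i *ᵥ x) ᵥ* S := by
        show star (S *ᵥ (c i *ᵥ x)) = _
        rw [star_mulVec, hSpsd.1]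
      have e3 : dotProduct (star (c i *ᵥ x)) (S *ᵥ u i)
          = dotProduct (star (u i)) (u i) := by
        rw [Matrix.dotProduct_mulVec, ← e2']
      rw [e3, dot_self_eq]
    have hx : dotProduct (star x) (ρ *ᵥ x)
        = ((∑ k, Complex.normSq ((∑ i, u i) k) : ℝ) : ℂ) := by
      have e4 : ρ *ᵥ x = S *ᵥ (S *ᵥ x) := by
        conv_rhs => rw [Matrix.mulVec_mulVec, hSS]
      have e4' : star (S *ᵥ x) = star x ᵥ* S := by rw [star_mulVec, hSpsd.1]
      have e5 : dotProduct (star x) (S *ᵥ (S *ᵥ x))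
          = dotProduct (star (S *ᵥ x)) (S *ᵥ x) := by
        rw [Matrix.dotProduct_mulVec, ← e4']
      have e6 : S *ᵥ x = ∑ i, u i := by
        conv_lhs => rw [show x = (∑ i, c i) *ᵥ x by rw [hsum, Matrix.one_mulVec]]
        rw [sum_mulVec', mulVec_sum']
      rw [e4, e5, e6, dot_self_eq]
    rw [Matrix.sub_mulVec, Matrix.smul_mulVec, dotProduct_sub,
      dotProduct_smul, sum_mulVec', dot_sum]
    rw [Finset.sum_congr rfl (fun i _ => hterm i), hx]
    rw [← Complex.ofReal_sum]
    have hle := normSq_sum_le u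
    have : (m : ℂ) • ((∑ i, ∑ k, Complex.normSq (u i k) : ℝ) : ℂ)
        - ((∑ k, Complex.normSq ((∑ i, u i) k) : ℝ) : ℂ)
        = (((m : ℝ) * (∑ i, ∑ k, Complex.normSq (u i k))
            - (∑ k, Complex.normSq ((∑ i, u i) k)) : ℝ) : ℂ) := by
      push_cast
      simp [smul_eq_mul]
    rw [this]
    rw [Complex.zero_le_real]
    linarith

lemma matLog_eq {A : Matrix n n ℂ} (hA : A.IsHermitian) : matLog A = hA.cfc Real.log := by
  unfold matLog matFun
  exact hA.cfc_eq _

end PinchProofAux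

open PinchProofAux

/-- Relative entropy to a pinched state is an entropy gain bounded
by the logarithm of the number of projections. -/
theorem relEnt_pinch_entropy_gain {d m : ℕ} (hd : 1 ≤ d)
    (c : Fin m → Matrix (Fin d) (Fin d) ℂ)
    (hherm : ∀ i, (c i).IsHermitian) (hnz : ∀ i, c i ≠ 0)
    (hidem : ∀ i, c i * c i = c i)
    (horth : ∀ i j, i ≠ j → c i * c j = 0)
    (hsum : ∑ i, c i = 1)
    (ρ : Matrix (Fin d) (Fin d) ℂ) (hρ : IsFaithfulState ρ) :
    relEnt ρ (∑ i, c i * ρ * c i) = vNEnt (∑ i, c i * ρ * c i) - vNEnt ρ ∧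
    vNEnt (∑ i, c i * ρ * c i) - vNEnt ρ ≤ Real.log (m : ℝ) := by
  classical
  obtain ⟨hρpd, hρtr⟩ := hρ
  have hρH : ρ.IsHermitian := hρpd.1
  set σ : Matrix (Fin d) (Fin d) ℂ := ∑ i, c i * ρ * c i with hσdef
  -- σ is Hermitian
  have hσH : σ.IsHermitian := by
    rw [hσdef]
    unfold Matrix.IsHermitian
    rw [Matrix.conjTranspose_sum]
    refine Finset.sum_congr rfl fun i _ => ?_
    rw [Matrix.conjTranspose_mul, Matrix.conjTranspose_mul, hherm i, hρH, ← Matrix.mul_assoc]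
  -- commutation of the projections with σ
  have hcomm : ∀ i, Commute (c i) σ := by
    intro i
    have h1 : c i * σ = c i * ρ * c i := by
      rw [hσdef, Finset.mul_sum]
      rw [Finset.sum_eq_single i]
      · rw [← Matrix.mul_assoc, ← Matrix.mul_assoc, hidem i]
      · intro j _ hj
        have : c i * (c j * ρ * c j) = (c i * c j) * ρ * c j := by
          simp only [Matrix.mul_assoc]
        rw [this, horth i j (Ne.symm hj), Matrix.zero_mul, Matrix.zero_mul]
      · intro h
        exact absurd (Finset.mem_univ i) h
    have h2 : σ * c i = c i * ρ * c i := by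
      rw [hσdef, Finset.sum_mul]
      rw [Finset.sum_eq_single i]
      · rw [Matrix.mul_assoc, hidem i]
      · intro j _ hj
        rw [Matrix.mul_assoc, horth j i hj, Matrix.mul_zero]
      · intro h
        exact absurd (Finset.mem_univ i) h
    unfold Commute SemiconjBy
    rw [h1, h2]
  -- σ is positive definite
  have hσpd : σ.PosDef := by
    refine PosDef.of_dotProduct_mulVec_pos hσH fun x hx => ?_
    rw [hσdef, sum_mulVec', dot_sum]
    have hterm : ∀ i, (0:ℂ) ≤ dotProduct (star x) ((c i * ρ * c i) *ᵥ x) := by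
      intro i
      have e1 : c i * ρ * c i = (c i)ᴴ * ρ * (c i) := by rw [hherm i]
      rw [e1, dot_conj]
      exact hρpd.posSemidef.dotProduct_mulVec_nonneg _
    have hex : ∃ i, c i *ᵥ x ≠ 0 := by
      by_contra h
      push_neg at h
      apply hx
      have : x = (∑ i, c i) *ᵥ x := by rw [hsum, Matrix.one_mulVec]
      rw [this, sum_mulVec']
      simp [h]
    obtain ⟨i0, hi0⟩ := hex
    have hpos : (0:ℂ) < dotProduct (star x) ((c i0 * ρ * c i0) *ᵥ x) := by
      have e1 : c i0 * ρ * c i0 = (c i0)ᴴ * ρ * (c i0) := by rw [hherm i0]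
      rw [e1, dot_conj]
      exact hρpd.dotProduct_mulVec_pos hi0
    exact Finset.sum_pos' (fun i _ => hterm i) ⟨i0, Finset.mem_univ i0, hpos⟩
  -- trace of σ is 1
  have hσtr : σ.trace = 1 := by
    rw [hσdef, Matrix.trace_sum]
    have : ∀ i, (c i * ρ * c i).trace = (ρ * c i).trace := by
      intro i
      rw [Matrix.trace_mul_cycle, hidem i, Matrix.trace_mul_comm]
    rw [Finset.sum_congr rfl (fun i _ => this i)]
    have : ∑ i, (ρ * c i).trace = (ρ * ∑ i, c i).trace := by
      rw [Finset.mul_sum, Matrix.trace_sum]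
    rw [this, hsum, Matrix.mul_one, hρtr]
  -- Part 1: the entropy-difference identity
  have hLσ : ∀ i, Commute (c i) (matLog σ) := fun i => commute_cfc hσH (hcomm i) Real.log
  have hT4 : (ρ * matLog σ).trace = (σ * matLog σ).trace := by
    set L := matLog σ with hLdef
    have h1 : σ * L = ∑ i, (c i * ρ * c i * L) := by
      rw [hσdef, Finset.sum_mul]
    have h2 : ∀ i, (c i * ρ * c i * L).trace = (c i * (ρ * L)).trace := by
      intro i
      have e1 : c i * ρ * c i * L = c i * ρ * (L * c i) := by
        rw [Matrix.mul_assoc (c i * ρ), (hLσ i).eq]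
      rw [e1, ← Matrix.mul_assoc, Matrix.trace_mul_comm]
      have e2 : c i * (c i * ρ * L) = c i * ρ * L := by
        rw [show c i * (c i * ρ * L) = (c i * c i) * ρ * L by simp only [Matrix.mul_assoc],
          hidem i]
      rw [e2, Matrix.mul_assoc]
    have h3 : (σ * L).trace = ∑ i, (c i * (ρ * L)).trace := by
      rw [h1, Matrix.trace_sum]
      exact Finset.sum_congr rfl fun i _ => h2 i
    have h4 : ∑ i, (c i * (ρ * L)).trace = (ρ * L).trace := by
      rw [← Matrix.trace_sum, ← Finset.sum_mul, hsum, Matrix.one_mul]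
    rw [h3, h4]
  have hPart1 : relEnt ρ σ = vNEnt σ - vNEnt ρ := by
    unfold relEnt vNEnt
    rw [Matrix.mul_sub, Matrix.trace_sub, Complex.sub_re, hT4]
    ring
  refine ⟨hPart1, ?_⟩
  rw [← hPart1]
  -- Part 2: the bound by log m
  -- eigenvalue data
  have hlam_pos : ∀ j, 0 < hρH.eigenvalues j := hρpd.eigenvalues_pos
  have hs_pos : ∀ k, 0 < hσH.eigenvalues k := hσpd.eigenvalues_pos
  have hlam_sum : ∑ j, hρH.eigenvalues j = 1 := by
    have h := trace_myCfc hρH (fun x => x)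
    rw [myCfc_id] at h
    rw [hρtr] at h
    exact_mod_cast h.symm
  set T : Matrix (Fin d) (Fin d) ℂ :=
    star (hρH.eigenvectorUnitary : Matrix (Fin d) (Fin d) ℂ) *
      (hσH.eigenvectorUnitary : Matrix (Fin d) (Fin d) ℂ) with hTdef
  have hTmem : T ∈ Matrix.unitaryGroup (Fin d) ℂ := by
    rw [hTdef]
    exact mul_mem (Unitary.star_mem (hρH.eigenvectorUnitary).2) (hσH.eigenvectorUnitary).2
  set a : Fin d → Fin d → ℝ := fun j k => Complex.normSq (T j k) with hadef
  have hrow : ∀ j, ∑ k, a j k = 1 := fun j => rowsum_normSq hTmem j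
  -- trace formulas
  have hTrρLρ : (ρ * matLog ρ).trace
      = ((∑ j, hρH.eigenvalues j * Real.log (hρH.eigenvalues j) : ℝ) : ℂ) := by
    have h := myCfc_mul hρH (fun x => x) Real.log
    rw [myCfc_id] at h
    rw [matLog_eq hρH, h, trace_myCfc]
  have hTrσLσ : (σ * matLog σ).trace
      = ((∑ k, hσH.eigenvalues k * Real.log (hσH.eigenvalues k) : ℝ) : ℂ) := by
    have h := myCfc_mul hσH (fun x => x) Real.log
    rw [myCfc_id] at h
    rw [matLog_eq hσH, h, trace_myCfc]
  have hTrρLσ : (ρ * matLog σ).trace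
      = ((∑ j, ∑ k, hρH.eigenvalues j * Real.log (hσH.eigenvalues k) * a j k : ℝ) : ℂ) := by
    have h := trace_myCfc_mul_myCfc hρH hσH (fun x => x) Real.log
    rw [myCfc_id] at h
    rw [matLog_eq hσH, h]
  have hrelEnt : relEnt ρ σ
      = (∑ j, hρH.eigenvalues j * Real.log (hρH.eigenvalues j))
        - ∑ j, ∑ k, hρH.eigenvalues j * Real.log (hσH.eigenvalues k) * a j k := by
    unfold relEnt
    rw [Matrix.mul_sub, Matrix.trace_sub, Complex.sub_re, hTrρLρ, hTrρLσ]
    simp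
  -- Jensen setup
  set w : Fin d × Fin d → ℝ := fun p => hρH.eigenvalues p.1 * a p.1 p.2 with hwdef
  set xv : Fin d × Fin d → ℝ := fun p => hρH.eigenvalues p.1 / hσH.eigenvalues p.2 with hxvdef
  have hw0 : ∀ p ∈ (Finset.univ : Finset (Fin d × Fin d)), 0 ≤ w p := by
    intro p _
    exact mul_nonneg (hlam_pos p.1).le (Complex.normSq_nonneg _)
  have hw1 : ∑ p, w p = 1 := by
    rw [Fintype.sum_prod_type]
    have : ∀ j, ∑ k, w (j, k) = hρH.eigenvalues j := by
      intro j
      rw [show (∑ k, w (j, k)) = hρH.eigenvalues j * ∑ k, a j k by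
        rw [Finset.mul_sum]]
      rw [hrow j, mul_one]
    rw [Finset.sum_congr rfl (fun j _ => this j), hlam_sum]
  have hmem : ∀ p ∈ (Finset.univ : Finset (Fin d × Fin d)), xv p ∈ Set.Ioi (0:ℝ) := by
    intro p _
    exact div_pos (hlam_pos p.1) (hs_pos p.2)
  have hJ := (strictConcaveOn_log_Ioi.concaveOn).le_map_sum hw0 hw1 hmem
  have hLHS : ∑ p : Fin d × Fin d, w p • Real.log (xv p) = relEnt ρ σ := by
    rw [hrelEnt, Fintype.sum_prod_type, ← Finset.sum_sub_distrib]
    refine Finset.sum_congr rfl fun j _ => ?_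
    have e1 : ∀ k, w (j, k) • Real.log (xv (j, k))
        = (hρH.eigenvalues j * Real.log (hρH.eigenvalues j)) * a j k
          - hρH.eigenvalues j * Real.log (hσH.eigenvalues k) * a j k := by
      intro k
      rw [smul_eq_mul, hwdef, hxvdef]
      show hρH.eigenvalues j * a j k *
          Real.log (hρH.eigenvalues j / hσH.eigenvalues k) = _
      rw [Real.log_div (hlam_pos j).ne' (hs_pos k).ne']
      ring
    rw [Finset.sum_congr rfl (fun k _ => e1 k), Finset.sum_sub_distrib, ← Finset.mul_sum,
      hrow j, mul_one]
  -- identify the Jensen average with a trace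
  have hZeq : ∑ p : Fin d × Fin d, w p • xv p
      = ∑ j, ∑ k, (hρH.eigenvalues j * hρH.eigenvalues j) * (hσH.eigenvalues k)⁻¹ * a j k := by
    rw [Fintype.sum_prod_type]
    refine Finset.sum_congr rfl fun j _ => Finset.sum_congr rfl fun k _ => ?_
    rw [smul_eq_mul, hwdef, hxvdef]
    show hρH.eigenvalues j * a j k * (hρH.eigenvalues j / hσH.eigenvalues k) = _
    rw [div_eq_mul_inv]
    ring
  -- the matrix trace bound
  set Vh : Matrix (Fin d) (Fin d) ℂ := hσH.cfc (fun x => (Real.sqrt x)⁻¹) with hVhdef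
  have hVherm : Vh.IsHermitian := myCfc_herm hσH _
  have hσcfc : hσH.cfc (fun x => x) = σ := myCfc_id hσH
  have hVhσVh : Vh * σ * Vh = 1 := by
    rw [← hσcfc, hVhdef, myCfc_mul, myCfc_mul]
    rw [myCfc_congr hσH (g := fun _ => 1)]
    · exact myCfc_one hσH
    · intro k
      have hk := hs_pos k
      have hsq : Real.sqrt (hσH.eigenvalues k) * Real.sqrt (hσH.eigenvalues k)
          = hσH.eigenvalues k := Real.mul_self_sqrt hk.le
      have hne : Real.sqrt (hσH.eigenvalues k) ≠ 0 :=
        (Real.sqrt_pos.mpr hk).ne'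
      field_simp
      rw [sq, hsq]
  have hVhVh : Vh * Vh = hσH.cfc (fun x => x⁻¹) := by
    rw [hVhdef, myCfc_mul]
    apply myCfc_congr hσH
    intro k
    rw [← mul_inv, Real.mul_self_sqrt (hs_pos k).le]
  set X : Matrix (Fin d) (Fin d) ℂ := Vh * ρ * Vh with hXdef
  have hXpsd : X.PosSemidef := by
    have h := hρpd.posSemidef.conjTranspose_mul_mul_same (B := Vh)
    rw [hVherm] at h
    exact h
  have hpsd0 : PosSemidef ((m : ℂ) • σ - ρ) := by
    have := pinch_psd c hherm hsum hρpd.posSemidef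
    rw [← hσdef] at this
    exact this
  have hm1X : PosSemidef ((m : ℂ) • 1 - X) := by
    have h := hpsd0.conjTranspose_mul_mul_same (B := Vh)
    rw [hVherm] at h
    have e : Vh * ((m : ℂ) • σ - ρ) * Vh = (m : ℂ) • 1 - X := by
      rw [Matrix.mul_sub, Matrix.sub_mul, Matrix.mul_smul, Matrix.smul_mul, hVhσVh, hXdef]
    rw [e] at h
    exact h
  set SX := hXpsd.sqrt with hSXdef
  have hSXX : SX * SX = X := hXpsd.sqrt_mul_self
  have hSXherm : SXᴴ = SX := hXpsd.posSemidef_sqrt.1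
  have hkey : (m : ℂ) • X - X * X = SX * ((m : ℂ) • 1 - X) * SX := by
    rw [← hSXX]
    noncomm_ring
  have hpsdQ : PosSemidef ((m : ℂ) • X - X * X) := by
    rw [hkey]
    have h := hm1X.conjTranspose_mul_mul_same (B := SX)
    rw [hSXherm] at h
    exact h
  have htr1 : (X * σ).trace = 1 := by
    have e1 : X * σ = Vh * (ρ * (Vh * σ)) := by
      rw [hXdef]; simp only [Matrix.mul_assoc]
    rw [e1, Matrix.trace_mul_comm]
    have e2 : ρ * (Vh * σ) * Vh = ρ * (Vh * σ * Vh) := by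
      simp only [Matrix.mul_assoc]
    rw [e2, hVhσVh, Matrix.mul_one, hρtr]
  have htr2 : ((X * X) * σ).trace = ((ρ * ρ) * hσH.cfc (fun x => x⁻¹)).trace := by
    have e1 : (X * X) * σ = Vh * ((ρ * (hσH.cfc (fun x => x⁻¹)) * ρ) * (Vh * σ)) := by
      rw [hXdef, ← hVhVh]
      simp only [Matrix.mul_assoc]
    rw [e1, Matrix.trace_mul_comm]
    have e2 : ρ * (hσH.cfc (fun x => x⁻¹)) * ρ * (Vh * σ) * Vh
        = ρ * (hσH.cfc (fun x => x⁻¹)) * ρ * (Vh * σ * Vh) := by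
      simp only [Matrix.mul_assoc]
    rw [e2, hVhσVh, Matrix.mul_one, Matrix.trace_mul_cycle]
  have hTrZ : ((ρ * ρ) * hσH.cfc (fun x => x⁻¹)).trace
      = ((∑ j, ∑ k, (hρH.eigenvalues j * hρH.eigenvalues j) * (hσH.eigenvalues k)⁻¹ * a j k
          : ℝ) : ℂ) := by
    have h := trace_myCfc_mul_myCfc hρH hσH (fun x => x * x) (fun x => x⁻¹)
    have h2 := myCfc_mul hρH (fun x => x) (fun x => x)
    rw [myCfc_id] at h2
    rw [← h2] at h
    exact h
  -- the bound Z ≤ m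
  have hZle : ∑ p : Fin d × Fin d, w p • xv p ≤ (m : ℝ) := by
    rw [hZeq]
    have h0 := psd_trace_mul_re_nonneg hpsdQ hσpd.posSemidef
    have e : ((m : ℂ) • X - X * X) * σ = (m : ℂ) • (X * σ) - (X * X) * σ := by
      rw [Matrix.sub_mul, Matrix.smul_mul]
    rw [e, Matrix.trace_sub, Matrix.trace_smul, Complex.sub_re] at h0
    have e2 : ((m : ℂ) • (X * σ).trace).re = (m : ℝ) := by
      rw [htr1]
      simp
    rw [e2] at h0
    have e3 : (((X * X) * σ).trace).re
        = ∑ j, ∑ k, (hρH.eigenvalues j * hρH.eigenvalues j) * (hσH.eigenvalues k)⁻¹ * a j k := by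
      rw [htr2, hTrZ, Complex.ofReal_re]
    rw [e3] at h0
    linarith
  have hZpos : 0 < ∑ p : Fin d × Fin d, w p • xv p := by
    have hex : ∃ p ∈ (Finset.univ : Finset (Fin d × Fin d)), (0:ℝ) < w p := by
      by_contra h
      push_neg at h
      have : ∑ p : Fin d × Fin d, w p ≤ 0 :=
        Finset.sum_nonpos fun p _ => h p (Finset.mem_univ p)
      rw [hw1] at this
      linarith
    obtain ⟨p0, _, hp0⟩ := hex
    refine Finset.sum_pos' (fun p _ => ?_) ⟨p0, Finset.mem_univ p0, ?_⟩
    · exact smul_nonneg (hw0 p (Finset.mem_univ p)) (le_of_lt (hmem p (Finset.mem_univ p)))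
    · exact smul_pos hp0 (hmem p0 (Finset.mem_univ p0))
  calc relEnt ρ σ = ∑ p : Fin d × Fin d, w p • Real.log (xv p) := hLHS.symm
    _ ≤ Real.log (∑ p : Fin d × Fin d, w p • xv p) := hJ
    _ ≤ Real.log (m : ℝ) := Real.log_le_log hZpos hZle

end
end

section
/- The Petz relative Rényi entropy dominates the sandwiched relative Rényi entropy: For faithful states ρ, σ in M_d(ℂ) and every s > 0, D_{1+s}(ρ||σ) ≥ D̃_{1+s}(ρ||σ). -/
open Matrix Filter
open scoped Kronecker ComplexOrder

noncomputable section

/-! ### Auxiliary machinery for the proof -/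

namespace ALTAux

open Complex

variable {n : Type*} [Fintype n] [DecidableEq n]

/-- Complex power of a Hermitian matrix via its eigendecomposition. -/
noncomputable def mcpow {A : Matrix n n ℂ} (hA : A.IsHermitian) (z : ℂ) : Matrix n n ℂ :=
  (hA.eigenvectorUnitary : Matrix n n ℂ) *
    Matrix.diagonal (fun i => Complex.exp (z * (Real.log (hA.eigenvalues i) : ℂ))) *
    star (hA.eigenvectorUnitary : Matrix n n ℂ)

variable {A : Matrix n n ℂ}

lemma unit_mul_star (hA : A.IsHermitian) :
    (hA.eigenvectorUnitary : Matrix n n ℂ) * star (hA.eigenvectorUnitary : Matrix n n ℂ) = 1 :=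
  Matrix.mem_unitaryGroup_iff.mp (SetLike.coe_mem hA.eigenvectorUnitary)

lemma star_mul_unit (hA : A.IsHermitian) :
    star (hA.eigenvectorUnitary : Matrix n n ℂ) * (hA.eigenvectorUnitary : Matrix n n ℂ) = 1 :=
  Matrix.mem_unitaryGroup_iff'.mp (SetLike.coe_mem hA.eigenvectorUnitary)

lemma star_mul_unit_cancel (hA : A.IsHermitian) (X : Matrix n n ℂ) :
    star (hA.eigenvectorUnitary : Matrix n n ℂ) *
      ((hA.eigenvectorUnitary : Matrix n n ℂ) * X) = X := by
  rw [← mul_assoc, star_mul_unit, one_mul]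

lemma mcpow_mul (hA : A.IsHermitian) (z w : ℂ) :
    mcpow hA z * mcpow hA w = mcpow hA (z + w) := by
  unfold mcpow
  simp only [mul_assoc, star_mul_unit_cancel]
  congr 1
  rw [← mul_assoc, Matrix.diagonal_mul_diagonal]
  simp only [← Complex.exp_add, ← add_mul]

lemma mcpow_mul_assoc (hA : A.IsHermitian) (z w : ℂ) (X : Matrix n n ℂ) :
    mcpow hA z * (mcpow hA w * X) = mcpow hA (z + w) * X := by
  rw [← mul_assoc, mcpow_mul]

lemma mcpow_zero (hA : A.IsHermitian) : mcpow hA 0 = 1 := by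
  unfold mcpow
  simp only [zero_mul, Complex.exp_zero]
  rw [show (Matrix.diagonal fun _ : n => (1 : ℂ)) = 1 from Matrix.diagonal_one, mul_one,
    unit_mul_star]

lemma mcpow_conjTranspose (hA : A.IsHermitian) (z : ℂ) :
    (mcpow hA z)ᴴ = mcpow hA (starRingEnd ℂ z) := by
  have hfun : (star fun i => Complex.exp (z * (Real.log (hA.eigenvalues i) : ℂ))) =
      fun i => Complex.exp ((starRingEnd ℂ) z * (Real.log (hA.eigenvalues i) : ℂ)) := by
    funext i
    simp only [Pi.star_apply, RCLike.star_def, ← Complex.exp_conj, _root_.map_mul, Complex.conj_ofReal]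
  unfold mcpow
  rw [← Matrix.star_eq_conjTranspose, Matrix.star_mul, Matrix.star_mul, star_star,
    Matrix.star_eq_conjTranspose (Matrix.diagonal _), Matrix.diagonal_conjTranspose, hfun]
  simp only [mul_assoc]

lemma mcpow_apply (hA : A.IsHermitian) (z : ℂ) (i j : n) :
    mcpow hA z i j = ∑ k, (hA.eigenvectorUnitary : Matrix n n ℂ) i k *
      Complex.exp (z * (Real.log (hA.eigenvalues k) : ℂ)) *
      star ((hA.eigenvectorUnitary : Matrix n n ℂ) j k) := by
  unfold mcpow
  rw [Matrix.mul_apply]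
  refine Finset.sum_congr rfl fun k _ => ?_
  rw [Matrix.mul_diagonal, Matrix.star_apply]

lemma exp_real_mul_log {a : ℝ} (ha : 0 < a) (t : ℝ) :
    Complex.exp ((t : ℂ) * (Real.log a : ℂ)) = ((a ^ t : ℝ) : ℂ) := by
  rw [← Complex.ofReal_mul, ← Complex.ofReal_exp, Real.rpow_def_of_pos ha, mul_comm]

lemma mcpow_real {A : Matrix n n ℂ} (hA : A.PosDef) (t : ℝ) :
    mcpow hA.1 (t : ℂ) = matRpow A t := by
  unfold matRpow matFun
  rw [hA.1.cfc_eq, Matrix.IsHermitian.cfc]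
  unfold mcpow
  have hfun : (fun i => Complex.exp ((t : ℂ) * (Real.log (hA.1.eigenvalues i) : ℂ))) =
      (RCLike.ofReal ∘ (fun x : ℝ => x ^ t) ∘ hA.1.eigenvalues) := by
    funext i
    rw [exp_real_mul_log (hA.eigenvalues_pos i)]
    rfl
  rw [hfun, Unitary.conjStarAlgAut_apply]

lemma matRpow_one {A : Matrix n n ℂ} (hA : A.PosDef) : matRpow A 1 = A := by
  unfold matRpow matFun
  have ha : IsSelfAdjoint A := hA.1.isSelfAdjoint
  rw [cfc_congr (g := fun x : ℝ => x) (fun x _ => Real.rpow_one x), cfc_id' ℝ A]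

lemma mcpow_one {A : Matrix n n ℂ} (hA : A.PosDef) : mcpow hA.1 1 = A := by
  rw [show (1 : ℂ) = ((1 : ℝ) : ℂ) by norm_num, mcpow_real hA, matRpow_one hA]

lemma trace_mcpow (hA : A.IsHermitian) (z : ℂ) :
    (mcpow hA z).trace = ∑ i, Complex.exp (z * (Real.log (hA.eigenvalues i) : ℂ)) := by
  unfold mcpow
  rw [Matrix.trace_mul_cycle, star_mul_unit, one_mul, Matrix.trace_diagonal]

lemma trace_matRpow {A : Matrix n n ℂ} (hA : A.PosDef) (t : ℝ) :
    (matRpow A t).trace = ((∑ i, hA.1.eigenvalues i ^ t : ℝ) : ℂ) := by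
  rw [← mcpow_real hA, trace_mcpow]
  push_cast
  exact Finset.sum_congr rfl fun i _ => exp_real_mul_log (hA.eigenvalues_pos i) t

lemma posDef_conjTranspose_mul_mul {A B : Matrix n n ℂ} (hA : A.PosDef) (hB : IsUnit B) :
    (Bᴴ * A * B).PosDef := by
  exact hA.conjTranspose_mul_mul_same (Matrix.mulVec_injective_iff_isUnit.mpr hB)

lemma matRpow_posDef {A : Matrix n n ℂ} (hA : A.PosDef) (t : ℝ) : (matRpow A t).PosDef := by
  rw [← mcpow_real hA]
  unfold mcpow
  have hD : (Matrix.diagonal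
      (fun i => Complex.exp ((t : ℂ) * (Real.log (hA.1.eigenvalues i) : ℂ)))).PosDef := by
    refine Matrix.PosDef.diagonal fun i => ?_
    rw [exp_real_mul_log (hA.eigenvalues_pos i)]
    exact Complex.zero_lt_real.mpr (Real.rpow_pos_of_pos (hA.eigenvalues_pos i) t)
  have hUnit : IsUnit (star (hA.1.eigenvectorUnitary : Matrix n n ℂ)) :=
    ⟨⟨star (hA.1.eigenvectorUnitary : Matrix n n ℂ), (hA.1.eigenvectorUnitary : Matrix n n ℂ),
      star_mul_unit hA.1, unit_mul_star hA.1⟩, rfl⟩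
  have h := posDef_conjTranspose_mul_mul hD hUnit
  rwa [← Matrix.star_eq_conjTranspose, star_star] at h

lemma posDef_spectrum_pos {A : Matrix n n ℂ} (hA : A.PosDef) :
    ∀ x ∈ spectrum ℝ A, 0 < x := by
  rw [hA.1.spectrum_real_eq_range_eigenvalues]
  rintro x ⟨i, rfl⟩
  exact hA.eigenvalues_pos i

lemma contOn_rpow {S : Set ℝ} (h : ∀ x ∈ S, 0 < x) (t : ℝ) :
    ContinuousOn (fun x : ℝ => x ^ t) S := fun x hx =>
  (Real.continuousAt_rpow_const x t (Or.inl (h x hx).ne')).continuousWithinAt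

lemma matRpow_matRpow {A : Matrix n n ℂ} (hA : A.PosDef) (u v : ℝ) :
    matRpow (matRpow A u) v = matRpow A (u * v) := by
  unfold matRpow matFun
  have ha : IsSelfAdjoint A := hA.1.isSelfAdjoint
  have hsp := posDef_spectrum_pos hA
  have himg : ∀ x ∈ (fun x : ℝ => x ^ u) '' spectrum ℝ A, 0 < x := by
    rintro x ⟨y, hy, rfl⟩
    exact Real.rpow_pos_of_pos (hsp y hy) u
  rw [← cfc_comp (fun x : ℝ => x ^ v) (fun x : ℝ => x ^ u) A ha
    (contOn_rpow himg v) (contOn_rpow hsp u)]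
  exact cfc_congr fun x hx => (Real.rpow_mul (hsp x hx).le u v).symm

lemma trace_matRpow_pos [Nonempty n] {A : Matrix n n ℂ} (hA : A.PosDef) (t : ℝ) :
    0 < (matRpow A t).trace.re := by
  rw [trace_matRpow hA, Complex.ofReal_re]
  exact Finset.sum_pos (fun i _ => Real.rpow_pos_of_pos (hA.eigenvalues_pos i) t)
    Finset.univ_nonempty

lemma entry_norm_le_one {N : Matrix n n ℂ} (hN : star N * N = 1) (i j : n) : ‖N i j‖ ≤ 1 := by
  have h : (star N * N) j j = (1 : Matrix n n ℂ) j j := by rw [hN]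
  rw [Matrix.mul_apply, Matrix.one_apply_eq] at h
  have h2 : ∑ k, (Complex.normSq (N k j) : ℂ) = 1 := by
    rw [← h]
    refine Finset.sum_congr rfl fun k _ => ?_
    rw [Matrix.star_apply, RCLike.star_def, mul_comm, Complex.mul_conj]
  have h3 : ∑ k, Complex.normSq (N k j) = 1 := by
    have h4 := congrArg Complex.re h2
    simpa using h4
  have h4 : Complex.normSq (N i j) ≤ 1 := by
    rw [← h3]
    exact Finset.single_le_sum (f := fun k => Complex.normSq (N k j))
      (fun k _ => Complex.normSq_nonneg _) (Finset.mem_univ i)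
  nlinarith [Complex.sq_norm (N i j), norm_nonneg (N i j)]

lemma mcpow_mem_unitary (hA : A.IsHermitian) {z : ℂ} (hz : z.re = 0) :
    mcpow hA z ∈ unitary (Matrix n n ℂ) := by
  have hconj : starRingEnd ℂ z = -z := by
    apply Complex.ext <;> simp [hz]
  constructor
  · rw [Matrix.star_eq_conjTranspose, mcpow_conjTranspose, hconj, mcpow_mul, neg_add_cancel,
      mcpow_zero]
  · rw [Matrix.star_eq_conjTranspose, mcpow_conjTranspose, hconj, mcpow_mul, add_neg_cancel,
      mcpow_zero]

lemma norm_trace_unitary_mul_mcpow (hA : A.IsHermitian) {W : Matrix n n ℂ}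
    (hW : W ∈ unitary (Matrix n n ℂ)) (w : ℂ) :
    ‖(W * mcpow hA w).trace‖ ≤ ∑ i, Real.exp (w.re * Real.log (hA.eigenvalues i)) := by
  set U : Matrix n n ℂ := (hA.eigenvectorUnitary : Matrix n n ℂ) with hUdef
  set D : Matrix n n ℂ :=
    Matrix.diagonal (fun i => Complex.exp (w * (Real.log (hA.eigenvalues i) : ℂ))) with hDdef
  have hrw : W * mcpow hA w = W * U * D * star U := by
    unfold mcpow
    rw [← hUdef, ← hDdef]
    simp only [mul_assoc]
  rw [hrw, Matrix.trace_mul_cycle]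
  have hUmem : U ∈ unitary (Matrix n n ℂ) := SetLike.coe_mem hA.eigenvectorUnitary
  have hN : star U * (W * U) ∈ unitary (Matrix n n ℂ) :=
    mul_mem (Unitary.star_mem hUmem) (mul_mem hW hUmem)
  have htr : (star U * (W * U) * D).trace =
      ∑ i, (star U * (W * U)) i i * Complex.exp (w * (Real.log (hA.eigenvalues i) : ℂ)) := by
    rw [Matrix.trace]
    refine Finset.sum_congr rfl fun i _ => ?_
    rw [Matrix.diag_apply, hDdef, Matrix.mul_diagonal]
  rw [htr]
  refine (norm_sum_le _ _).trans (Finset.sum_le_sum fun i _ => ?_)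
  rw [norm_mul]
  have h1 : ‖(star U * (W * U)) i i‖ ≤ 1 := entry_norm_le_one hN.1 i i
  have h2 : ‖Complex.exp (w * (Real.log (hA.eigenvalues i) : ℂ))‖ =
      Real.exp (w.re * Real.log (hA.eigenvalues i)) := by
    rw [Complex.norm_exp]
    congr 1
    simp [Complex.mul_re]
  rw [h2]
  calc ‖(star U * (W * U)) i i‖ * Real.exp (w.re * Real.log (hA.eigenvalues i))
      ≤ 1 * Real.exp (w.re * Real.log (hA.eigenvalues i)) :=
        mul_le_mul_of_nonneg_right h1 (Real.exp_nonneg _)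
    _ = _ := one_mul _

lemma trace_mul_conjTranspose_self (P : Matrix n n ℂ) :
    (P * Pᴴ).trace = ((∑ i, ∑ j, ‖P i j‖ ^ 2 : ℝ) : ℂ) := by
  rw [Matrix.trace]
  push_cast
  refine Finset.sum_congr rfl fun i _ => ?_
  rw [Matrix.diag_apply, Matrix.mul_apply]
  refine Finset.sum_congr rfl fun j _ => ?_
  rw [Matrix.conjTranspose_apply, RCLike.star_def, Complex.mul_conj]
  norm_cast
  rw [Complex.normSq_eq_norm_sq]

lemma trace_re_nonneg_mul_conjTranspose (P : Matrix n n ℂ) : 0 ≤ (P * Pᴴ).trace.re := by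
  rw [trace_mul_conjTranspose_self P, Complex.ofReal_re]
  exact Finset.sum_nonneg fun i _ => Finset.sum_nonneg fun j _ => sq_nonneg _

lemma norm_trace_mul_le_cs (P Q : Matrix n n ℂ) :
    ‖(P * Q).trace‖ ^ 2 ≤ (P * Pᴴ).trace.re * (Q * Qᴴ).trace.re := by
  have htr : (P * Q).trace = ∑ i, ∑ j, P i j * Q j i := by
    rw [Matrix.trace]
    exact Finset.sum_congr rfl fun i _ => by rw [Matrix.diag_apply, Matrix.mul_apply]
  have hS : ‖(P * Q).trace‖ ≤ ∑ i, ∑ j, ‖P i j‖ * ‖Q j i‖ := by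
    rw [htr]
    refine (norm_sum_le _ _).trans (Finset.sum_le_sum fun i _ => ?_)
    refine (norm_sum_le _ _).trans (Finset.sum_le_sum fun j _ => ?_)
    rw [norm_mul]
  have hcs : (∑ x : n × n, ‖P x.1 x.2‖ * ‖Q x.2 x.1‖) ^ 2 ≤
      (∑ x : n × n, ‖P x.1 x.2‖ ^ 2) * (∑ x : n × n, ‖Q x.2 x.1‖ ^ 2) :=
    Finset.sum_mul_sq_le_sq_mul_sq Finset.univ _ _
  have e1 : (∑ x : n × n, ‖P x.1 x.2‖ * ‖Q x.2 x.1‖) = ∑ i, ∑ j, ‖P i j‖ * ‖Q j i‖ :=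
    Fintype.sum_prod_type _
  have e2 : (∑ x : n × n, ‖P x.1 x.2‖ ^ 2) = ∑ i, ∑ j, ‖P i j‖ ^ 2 := Fintype.sum_prod_type _
  have e3 : (∑ x : n × n, ‖Q x.2 x.1‖ ^ 2) = ∑ i, ∑ j, ‖Q i j‖ ^ 2 := by
    rw [Fintype.sum_prod_type]
    exact Finset.sum_comm
  have h4 : ‖(P * Q).trace‖ ^ 2 ≤ (∑ i, ∑ j, ‖P i j‖ ^ 2) * (∑ i, ∑ j, ‖Q i j‖ ^ 2) := by
    calc ‖(P * Q).trace‖ ^ 2 ≤ (∑ i, ∑ j, ‖P i j‖ * ‖Q j i‖) ^ 2 :=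
          pow_le_pow_left₀ (norm_nonneg _) hS 2
      _ ≤ _ := by rw [← e1, ← e2, ← e3]; exact hcs
  rwa [trace_mul_conjTranspose_self P, trace_mul_conjTranspose_self Q,
    Complex.ofReal_re, Complex.ofReal_re]

lemma differentiable_mcpow_entry (hA : A.IsHermitian) {φ : ℂ → ℂ} (hφ : Differentiable ℂ φ)
    (i j : n) : Differentiable ℂ fun z => mcpow hA (φ z) i j := by
  simp only [mcpow_apply]
  refine Differentiable.fun_sum fun k _ => ?_
  refine Differentiable.mul (Differentiable.mul (differentiable_const _) ?_)
    (differentiable_const _)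
  exact Complex.differentiable_exp.comp (hφ.mul_const _)

lemma differentiable_entry_mul {F G : ℂ → Matrix n n ℂ}
    (hF : ∀ i j, Differentiable ℂ fun z => F z i j)
    (hG : ∀ i j, Differentiable ℂ fun z => G z i j) (i j : n) :
    Differentiable ℂ fun z => (F z * G z) i j := by
  simp only [Matrix.mul_apply]
  exact Differentiable.fun_sum fun k _ => (hF i k).mul (hG k j)

lemma differentiable_trace {F : ℂ → Matrix n n ℂ}
    (hF : ∀ i j, Differentiable ℂ fun z => F z i j) :
    Differentiable ℂ fun z => (F z).trace := by
  simp only [Matrix.trace]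
  exact Differentiable.fun_sum fun i _ => hF i i

lemma norm_mcpow_entry_le (hA : A.IsHermitian) {w : ℂ} {c : ℝ} (hc : |w.re| ≤ c) (i j : n) :
    ‖mcpow hA w i j‖ ≤ ∑ k, Real.exp (c * |Real.log (hA.eigenvalues k)|) := by
  rw [mcpow_apply]
  refine (norm_sum_le _ _).trans (Finset.sum_le_sum fun k _ => ?_)
  rw [norm_mul, norm_mul]
  have h1 : ‖(hA.eigenvectorUnitary : Matrix n n ℂ) i k‖ ≤ 1 :=
    entry_norm_le_one (star_mul_unit hA) i k
  have h2 : ‖star ((hA.eigenvectorUnitary : Matrix n n ℂ) j k)‖ ≤ 1 := by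
    rw [norm_star]
    exact entry_norm_le_one (star_mul_unit hA) j k
  have h3 : ‖Complex.exp (w * (Real.log (hA.eigenvalues k) : ℂ))‖ ≤
      Real.exp (c * |Real.log (hA.eigenvalues k)|) := by
    rw [Complex.norm_exp]
    refine Real.exp_le_exp.mpr ?_
    have hre : (w * (Real.log (hA.eigenvalues k) : ℂ)).re =
        w.re * Real.log (hA.eigenvalues k) := by
      simp [Complex.mul_re]
    rw [hre]
    calc w.re * Real.log (hA.eigenvalues k)
        ≤ |w.re * Real.log (hA.eigenvalues k)| := le_abs_self _
      _ = |w.re| * |Real.log (hA.eigenvalues k)| := abs_mul _ _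
      _ ≤ c * |Real.log (hA.eigenvalues k)| :=
          mul_le_mul_of_nonneg_right hc (abs_nonneg _)
  calc ‖(hA.eigenvectorUnitary : Matrix n n ℂ) i k‖ *
        ‖Complex.exp (w * (Real.log (hA.eigenvalues k) : ℂ))‖ *
        ‖star ((hA.eigenvectorUnitary : Matrix n n ℂ) j k)‖
      ≤ 1 * Real.exp (c * |Real.log (hA.eigenvalues k)|) * 1 :=
        mul_le_mul (mul_le_mul h1 h3 (norm_nonneg _) zero_le_one) h2 (norm_nonneg _)
          (by positivity)
    _ = Real.exp (c * |Real.log (hA.eigenvalues k)|) := by ring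

lemma entry_mul_bound {M N : Matrix n n ℂ} {a b : ℝ}
    (ha : ∀ i j, ‖M i j‖ ≤ a) (hb : ∀ i j, ‖N i j‖ ≤ b) (ha0 : 0 ≤ a) (i j : n) :
    ‖(M * N) i j‖ ≤ (Fintype.card n : ℝ) * (a * b) := by
  rw [Matrix.mul_apply]
  refine (norm_sum_le _ _).trans ?_
  calc ∑ k, ‖M i k * N k j‖ ≤ ∑ _k : n, a * b := by
        refine Finset.sum_le_sum fun k _ => ?_
        rw [norm_mul]
        exact mul_le_mul (ha i k) (hb k j) (norm_nonneg _) ha0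
    _ = (Fintype.card n : ℝ) * (a * b) := by
        rw [Finset.sum_const, Finset.card_univ, nsmul_eq_mul]

lemma norm_trace_le_of_entries {M : Matrix n n ℂ} {a : ℝ} (ha : ∀ i j, ‖M i j‖ ≤ a) :
    ‖M.trace‖ ≤ (Fintype.card n : ℝ) * a := by
  rw [Matrix.trace]
  refine (norm_sum_le _ _).trans ?_
  calc ∑ i, ‖M.diag i‖ ≤ ∑ _i : n, a := Finset.sum_le_sum fun i _ => ha i i
    _ = _ := by rw [Finset.sum_const, Finset.card_univ, nsmul_eq_mul]

end ALTAux
namespace ALTAux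

variable {n : Type*} [Fintype n] [DecidableEq n]

/-- **Araki–Lieb–Thirring inequality** (trace form), proved via Stein–Hirschman
complex interpolation using the Hadamard three-lines theorem. -/
lemma ALT [Nonempty n] {A B : Matrix n n ℂ} (hA : A.PosDef) (hB : B.PosDef)
    {θ : ℝ} (hθ0 : 0 < θ) (hθ1 : θ < 1) :
    (matRpow (matRpow B (θ/2) * matRpow A θ * matRpow B (θ/2)) (1/θ)).trace.re ≤
      (A * B).trace.re := by
  set p : ℝ := 1/θ with hp
  have hp1 : 1 < p := by rw [hp, lt_div_iff₀ hθ0, one_mul]; exact hθ1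
  have hp0 : 0 < p := lt_trans one_pos hp1
  set H : Matrix n n ℂ := matRpow B (θ/2) * matRpow A θ * matRpow B (θ/2) with hHdef
  have hBh : (matRpow B (θ/2)).PosDef := matRpow_posDef hB _
  have hAt : (matRpow A θ).PosDef := matRpow_posDef hA _
  have hH : H.PosDef := by
    have h := posDef_conjTranspose_mul_mul hAt hBh.isUnit
    rw [hHdef]
    rwa [Matrix.IsHermitian.eq hBh.1] at h
  set T : ℝ := ∑ i, hH.1.eigenvalues i ^ p with hTdef
  have hT0 : 0 < T :=
    Finset.sum_pos (fun i _ => Real.rpow_pos_of_pos (hH.eigenvalues_pos i) p)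
      Finset.univ_nonempty
  set C : ℝ := (A * B).trace.re with hCdef
  set g : ℂ → ℂ := fun z =>
    (mcpow hB.1 (z/2) * mcpow hA.1 z * mcpow hB.1 (z/2) *
      mcpow hH.1 ((1 - z) * (p : ℂ))).trace with hgdef
  -- value at θ
  have hgθ : g (θ : ℂ) = (T : ℂ) := by
    rw [hgdef]
    have e1 : ((θ : ℂ))/2 = ((θ/2 : ℝ) : ℂ) := by push_cast; ring
    have e2 : (1 - (θ : ℂ)) * (p : ℂ) = (((1-θ)*p : ℝ) : ℂ) := by push_cast; ring
    simp only
    rw [e1, e2, mcpow_real hB, mcpow_real hA, mcpow_real hH, ← hHdef]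
    have e3 : (1-θ)*p = p - 1 := by
      rw [hp]; field_simp
    rw [e3]
    have e4 : H * matRpow H (p-1) = matRpow H p := by
      calc H * matRpow H (p-1)
          = mcpow hH.1 1 * mcpow hH.1 ((p-1 : ℝ) : ℂ) := by rw [mcpow_one hH, mcpow_real hH]
        _ = mcpow hH.1 (1 + ((p-1 : ℝ) : ℂ)) := mcpow_mul hH.1 _ _
        _ = mcpow hH.1 ((p : ℝ) : ℂ) := by norm_num
        _ = matRpow H p := mcpow_real hH p
    rw [e4, trace_matRpow hH]
  -- boundary bound on re = 0
  have hbd0 : ∀ z : ℂ, z.re = 0 → ‖g z‖ ≤ T := by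
    intro z hz
    have hz2 : (z/2).re = 0 := by
      rw [show (2 : ℂ) = ((2 : ℝ) : ℂ) by norm_num, Complex.div_ofReal_re, hz, zero_div]
    have hWmem : mcpow hB.1 (z/2) * mcpow hA.1 z * mcpow hB.1 (z/2) ∈
        unitary (Matrix n n ℂ) :=
      mul_mem (mul_mem (mcpow_mem_unitary hB.1 hz2) (mcpow_mem_unitary hA.1 hz))
        (mcpow_mem_unitary hB.1 hz2)
    have hb := norm_trace_unitary_mul_mcpow hH.1 hWmem ((1 - z) * (p : ℂ))
    have hre : ((1 - z) * (p : ℂ)).re = p := by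
      rw [Complex.mul_re]
      simp [hz]
    rw [hgdef]
    simp only
    refine hb.trans ?_
    rw [hre, hTdef]
    refine le_of_eq (Finset.sum_congr rfl fun i _ => ?_)
    rw [mul_comm, ← Real.rpow_def_of_pos (hH.eigenvalues_pos i)]
  -- boundary bound on re = 1
  have hbd1 : ∀ z : ℂ, z.re = 1 → ‖g z‖ ≤ C := by
    intro z hz
    set P : Matrix n n ℂ := mcpow hB.1 (z/2) * mcpow hA.1 (z/2) with hPdef
    set Q : Matrix n n ℂ :=
      mcpow hA.1 (z/2) * (mcpow hB.1 (z/2) * mcpow hH.1 ((1 - z) * (p : ℂ))) with hQdef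
    have hhalf : z/2 + (starRingEnd ℂ) (z/2) = 1 := by
      have hc2 : (starRingEnd ℂ) (z/2) = (starRingEnd ℂ) z / 2 := by
        rw [map_div₀, map_ofNat]
      rw [hc2, ← add_div, Complex.add_conj, hz]
      norm_num
    have hhalf' : (starRingEnd ℂ) (z/2) + z/2 = 1 := by rw [add_comm]; exact hhalf
    have harg : (1 - z) * (p : ℂ) + (starRingEnd ℂ) ((1 - z) * (p : ℂ)) = 0 := by
      have hc3 : (starRingEnd ℂ) ((1 - z) * (p : ℂ)) =
          (1 - (starRingEnd ℂ) z) * (p : ℂ) := by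
        rw [_root_.map_mul, map_sub, _root_.map_one, Complex.conj_ofReal]
      rw [hc3, ← add_mul]
      have hc4 : (1 - z) + (1 - (starRingEnd ℂ) z) = 0 := by
        rw [show (1 - z) + (1 - (starRingEnd ℂ) z) = 2 - (z + (starRingEnd ℂ) z) by ring,
          Complex.add_conj, hz]
        norm_num
      rw [hc4, zero_mul]
    have hsplit : g z = (P * Q).trace := by
      rw [hgdef]
      simp only
      have hzz : mcpow hA.1 z = mcpow hA.1 (z/2) * mcpow hA.1 (z/2) := by
        rw [mcpow_mul, add_halves]
      rw [hzz, hPdef, hQdef]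
      simp only [mul_assoc]
    have hPP : (P * Pᴴ).trace = (A * B).trace := by
      have e : P * Pᴴ = mcpow hB.1 (z/2) *
          (A * mcpow hB.1 ((starRingEnd ℂ) (z/2))) := by
        rw [hPdef, Matrix.conjTranspose_mul, mcpow_conjTranspose, mcpow_conjTranspose]
        simp only [mul_assoc]
        rw [mcpow_mul_assoc, hhalf, mcpow_one hA]
      rw [e, Matrix.trace_mul_comm, mul_assoc, mcpow_mul, hhalf', mcpow_one hB]
    have hQQ : (Q * Qᴴ).trace = (A * B).trace := by
      have e : Q * Qᴴ = mcpow hA.1 (z/2) *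
          (B * mcpow hA.1 ((starRingEnd ℂ) (z/2))) := by
        rw [hQdef, Matrix.conjTranspose_mul, Matrix.conjTranspose_mul,
          mcpow_conjTranspose, mcpow_conjTranspose, mcpow_conjTranspose]
        simp only [mul_assoc]
        rw [mcpow_mul_assoc, harg, mcpow_zero, one_mul, mcpow_mul_assoc, hhalf,
          mcpow_one hB]
      rw [e, Matrix.trace_mul_comm, mul_assoc, mcpow_mul, hhalf', mcpow_one hA,
        Matrix.trace_mul_comm]
    have hcs := norm_trace_mul_le_cs P Q
    rw [hPP, hQQ] at hcs
    have hC0 : 0 ≤ (A * B).trace.re := by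
      rw [← hPP]; exact trace_re_nonneg_mul_conjTranspose P
    rw [hsplit, hCdef]
    nlinarith [norm_nonneg ((P * Q).trace)]
  -- differentiability
  have hdiff : Differentiable ℂ g := by
    rw [hgdef]
    refine differentiable_trace fun i j => ?_
    refine differentiable_entry_mul (fun i j => ?_) (fun i j => ?_) i j
    · refine differentiable_entry_mul (fun i j => ?_) (fun i j => ?_) i j
      · refine differentiable_entry_mul (fun i j => ?_) (fun i j => ?_) i j
        · exact differentiable_mcpow_entry hB.1 (differentiable_id.div_const 2) i j
        · exact differentiable_mcpow_entry hA.1 differentiable_id i j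
      · exact differentiable_mcpow_entry hB.1 (differentiable_id.div_const 2) i j
    · exact differentiable_mcpow_entry hH.1
        (((differentiable_const 1).sub differentiable_id).mul_const _) i j
  -- boundedness on the strip
  have hbdd : BddAbove ((norm ∘ g) '' (Complex.HadamardThreeLines.verticalClosedStrip 0 1)) := by
    set KB : ℝ := ∑ k, Real.exp (p * |Real.log (hB.1.eigenvalues k)|) with hKB
    set KA : ℝ := ∑ k, Real.exp (p * |Real.log (hA.1.eigenvalues k)|) with hKA
    set KH : ℝ := ∑ k, Real.exp (p * |Real.log (hH.1.eigenvalues k)|) with hKH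
    have hKB0 : 0 ≤ KB := Finset.sum_nonneg fun k _ => (Real.exp_pos _).le
    have hKA0 : 0 ≤ KA := Finset.sum_nonneg fun k _ => (Real.exp_pos _).le
    have hKH0 : 0 ≤ KH := Finset.sum_nonneg fun k _ => (Real.exp_pos _).le
    have hN0 : (0:ℝ) ≤ (Fintype.card n : ℝ) := Nat.cast_nonneg _
    refine ⟨(Fintype.card n : ℝ) * ((Fintype.card n : ℝ) *
      ((Fintype.card n : ℝ) * ((Fintype.card n : ℝ) * (KB * KA) * KB) * KH)), ?_⟩
    rintro y ⟨z, hzs, rfl⟩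
    have hz01 : z.re ∈ Set.Icc (0:ℝ) 1 := hzs
    obtain ⟨hz0, hz1⟩ := hz01
    have c1 : |(z/2).re| ≤ p := by
      rw [show (2 : ℂ) = ((2 : ℝ) : ℂ) by norm_num, Complex.div_ofReal_re, abs_le]
      constructor <;> [linarith; linarith]
    have c2 : |z.re| ≤ p := by rw [abs_le]; constructor <;> [linarith; linarith]
    have c3 : |((1 - z) * (p : ℂ)).re| ≤ p := by
      have hre : ((1 - z) * (p : ℂ)).re = (1 - z.re) * p := by
        rw [Complex.mul_re]
        simp
      rw [hre, abs_of_nonneg (by nlinarith)]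
      nlinarith
    have eB : ∀ i j, ‖mcpow hB.1 (z/2) i j‖ ≤ KB := fun i j =>
      norm_mcpow_entry_le hB.1 c1 i j
    have eA : ∀ i j, ‖mcpow hA.1 z i j‖ ≤ KA := fun i j =>
      norm_mcpow_entry_le hA.1 c2 i j
    have eH : ∀ i j, ‖mcpow hH.1 ((1 - z) * (p : ℂ)) i j‖ ≤ KH := fun i j =>
      norm_mcpow_entry_le hH.1 c3 i j
    have m1 := fun i j => entry_mul_bound eB eA hKB0 i j
    have m2 := fun i j => entry_mul_bound m1 eB
      (mul_nonneg hN0 (mul_nonneg hKB0 hKA0)) i j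
    have m3 := fun i j => entry_mul_bound m2 eH
      (mul_nonneg hN0 (mul_nonneg (mul_nonneg hN0 (mul_nonneg hKB0 hKA0)) hKB0)) i j
    have hfin := norm_trace_le_of_entries m3
    have hyg : (norm ∘ g) z = ‖g z‖ := rfl
    rw [hyg, hgdef]
    exact hfin
  -- three-lines theorem
  have hmem : (θ : ℂ) ∈ Complex.HadamardThreeLines.verticalClosedStrip 0 1 := by
    show (θ : ℂ).re ∈ Set.Icc (0:ℝ) 1
    rw [Complex.ofReal_re]
    exact ⟨hθ0.le, hθ1.le⟩
  have h3 := Complex.HadamardThreeLines.norm_le_interp_of_mem_verticalClosedStrip' (f := g) zero_lt_one hmem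
    (hdiff.diffContOnCl) hbdd
    (fun w hw => hbd0 w (by simpa using hw)) (fun w hw => hbd1 w (by simpa using hw))
  rw [hgθ, Complex.norm_real, Real.norm_eq_abs, abs_of_pos hT0, Complex.ofReal_re] at h3
  simp only [sub_zero, div_one] at h3
  -- h3 : T ≤ T ^ (1 - θ) * C ^ θ
  have hC0 : 0 ≤ C := le_trans (norm_nonneg (g 1)) (hbd1 1 (by simp))
  have hTle : T ≤ C := by
    rcases eq_or_lt_of_le hC0 with hC | hC
    · exfalso
      rw [← hC, Real.zero_rpow hθ0.ne', mul_zero] at h3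
      linarith
    · have hTT : T ^ (1-θ) * T ^ θ = T := by
        rw [← Real.rpow_add hT0]
        norm_num
      have h4 : T ^ (1-θ) * T ^ θ ≤ T ^ (1-θ) * C ^ θ := by rw [hTT]; exact h3
      have h5 : T ^ θ ≤ C ^ θ := le_of_mul_le_mul_left h4 (Real.rpow_pos_of_pos hT0 _)
      calc T = (T ^ θ) ^ (1/θ) := by
            rw [← Real.rpow_mul hT0.le, mul_one_div_cancel hθ0.ne', Real.rpow_one]
        _ ≤ (C ^ θ) ^ (1/θ) :=
            Real.rpow_le_rpow (Real.rpow_nonneg hT0.le θ) h5 (by positivity)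
        _ = C := by
            rw [← Real.rpow_mul hC.le, mul_one_div_cancel hθ0.ne', Real.rpow_one]
  rw [trace_matRpow hH, Complex.ofReal_re]
  exact hTle

end ALTAux

/-- The Petz relative Rényi entropy dominates the sandwiched relative Rényi entropy. -/
theorem sandRenyi_le_petzRenyi {d : ℕ} (hd : 1 ≤ d)
    (ρ σ : Matrix (Fin d) (Fin d) ℂ)
    (hρ : IsFaithfulState ρ) (hσ : IsFaithfulState σ) (s : ℝ) (hs : 0 < s) :
    sandRenyi s ρ σ ≤ petzRenyi s ρ σ := by
  have hn : Nonempty (Fin d) := ⟨⟨0, hd⟩⟩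
  obtain ⟨hρpos, -⟩ := hρ
  obtain ⟨hσpos, -⟩ := hσ
  have h1s : (0:ℝ) < 1 + s := by linarith
  set θ : ℝ := 1/(1+s) with hθ
  have hθ0 : 0 < θ := by positivity
  have hθ1 : θ < 1 := by
    rw [hθ, div_lt_one h1s]
    linarith
  have hA : (matRpow ρ (1+s)).PosDef := ALTAux.matRpow_posDef hρpos _
  have hB : (matRpow σ (-s)).PosDef := ALTAux.matRpow_posDef hσpos _
  have key := ALTAux.ALT hA hB hθ0 hθ1
  have e1 : matRpow (matRpow σ (-s)) (θ/2) = matRpow σ (-s / (2 * (1 + s))) := by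
    rw [ALTAux.matRpow_matRpow hσpos]
    congr 1
    rw [hθ]
    field_simp
  have e2 : matRpow (matRpow ρ (1+s)) θ = ρ := by
    rw [ALTAux.matRpow_matRpow hρpos, hθ, mul_one_div, div_self h1s.ne',
      ALTAux.matRpow_one hρpos]
  have e3 : 1/θ = 1+s := by rw [hθ, one_div_one_div]
  rw [e1, e2, e3] at key
  have hin : (matRpow σ (-s / (2 * (1 + s))) * ρ * matRpow σ (-s / (2 * (1 + s)))).PosDef := by
    have hBh := ALTAux.matRpow_posDef hσpos (-s / (2 * (1 + s)))
    have h := ALTAux.posDef_conjTranspose_mul_mul hρpos hBh.isUnit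
    rwa [Matrix.IsHermitian.eq hBh.1] at h
  have hpos := ALTAux.trace_matRpow_pos hin (1+s)
  unfold sandRenyi petzRenyi
  exact mul_le_mul_of_nonneg_left (Real.log_le_log hpos key) (inv_nonneg.mpr hs.le)

end
end

section
/- Pinching inequality: Let c_1, …, c_m be orthogonal projections in M_d(ℂ) (each c_i Hermitian with c_i² = c_i and c_i c_j = 0 for i ≠ j) satisfying c_1 + ⋯ + c_m = I, and let ρ ∈ M_d(ℂ) be positive semidefinite Hermitian. Then m · Σ_{i=1}^m c_i ρ c_i − ρ is positive semidefinite. -/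
open Matrix Filter
open scoped Kronecker ComplexOrder

noncomputable section

lemma pinch_aux1 {d : Type*} [Fintype d] [DecidableEq d] (A : Matrix d d ℂ) (x : d → ℂ) :
    star x ⬝ᵥ ((Aᴴ * A) *ᵥ x) = star (A *ᵥ x) ⬝ᵥ (A *ᵥ x) := by
  rw [star_mulVec, dotProduct_mulVec, dotProduct_mulVec, vecMul_vecMul]

lemma pinch_aux2 {d : Type*} [Fintype d] (y : EuclideanSpace ℂ d) :
    (star (y : d → ℂ) ⬝ᵥ (y : d → ℂ)).re = ‖y‖ ^ 2 := by
  rw [PiLp.norm_sq_eq_of_L2]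
  simp [dotProduct, Complex.mul_re, Complex.normSq, Complex.sq_norm, Complex.normSq_apply]

lemma pinch_aux2' {d : Type*} [Fintype d] (y : d → ℂ) :
    (star y ⬝ᵥ y).im = 0 := by
  simp only [dotProduct, Complex.im_sum, Pi.star_apply, Complex.mul_im, Complex.star_def,
    Complex.conj_re, Complex.conj_im]
  exact Finset.sum_eq_zero fun i _ => by ring

lemma pinch_aux3 {d : Type*} [Fintype d] {m : ℕ} (q : Fin m → EuclideanSpace ℂ d) :
    (star ((∑ i, q i : EuclideanSpace ℂ d) : d → ℂ) ⬝ᵥ ((∑ i, q i : EuclideanSpace ℂ d) : d → ℂ)).re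
      ≤ m * ∑ i, (star ((q i : d → ℂ)) ⬝ᵥ (q i : d → ℂ)).re := by
  rw [pinch_aux2]
  calc ‖∑ i, q i‖ ^ 2
      ≤ (∑ i, ‖q i‖) ^ 2 := pow_le_pow_left₀ (norm_nonneg _) (norm_sum_le _ _) 2
    _ ≤ (Finset.univ.card : ℝ) * ∑ i, ‖q i‖ ^ 2 := sq_sum_le_card_mul_sum_sq
    _ = m * ∑ i, (star ((q i : d → ℂ)) ⬝ᵥ (q i : d → ℂ)).re := by simp [pinch_aux2]

lemma pinch_sum_mulVec {n : Type*} [Fintype n] {m : ℕ} (A : Fin m → Matrix n n ℂ) (x : n → ℂ) :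
    (∑ i, A i) *ᵥ x = ∑ i, A i *ᵥ x := by
  exact
    map_sum (AddMonoidHom.mk' (fun B : Matrix n n ℂ => B *ᵥ x)
      (fun B C => Matrix.add_mulVec B C x)) A Finset.univ

lemma pinch_dotProduct_sum {n : Type*} [Fintype n] {m : ℕ} (v : n → ℂ) (w : Fin m → n → ℂ) :
    v ⬝ᵥ (∑ i, w i) = ∑ i, v ⬝ᵥ w i := by
  exact
    map_sum (AddMonoidHom.mk' (fun u : n → ℂ => v ⬝ᵥ u)
      (fun u u' => dotProduct_add v u u')) w Finset.univ

/-- Pinching inequality: `m · Σᵢ cᵢ ρ cᵢ - ρ` is positive semidefinite. -/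
theorem pinching_inequality {d m : ℕ}
    (c : Fin m → Matrix (Fin d) (Fin d) ℂ)
    (hherm : ∀ i, (c i).IsHermitian)
    (hidem : ∀ i, c i * c i = c i)
    (horth : ∀ i j, i ≠ j → c i * c j = 0)
    (hsum : ∑ i, c i = 1)
    (ρ : Matrix (Fin d) (Fin d) ℂ) (hρ : ρ.PosSemidef) :
    ((m : ℂ) • (∑ i, c i * ρ * c i) - ρ).PosSemidef := by
  obtain ⟨S, hSh, hSS⟩ : ∃ S : Matrix (Fin d) (Fin d) ℂ, Sᴴ = S ∧ Sᴴ * S = ρ := by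
    open scoped MatrixOrder in
    exact ⟨CFC.sqrt ρ, (CFC.sqrt_nonneg ρ).posSemidef.1, by
      rw [(CFC.sqrt_nonneg ρ).posSemidef.1.eq]; exact CFC.sqrt_mul_sqrt_self ρ hρ.nonneg⟩
  rw [posSemidef_iff_dotProduct_mulVec]
  constructor
  · have h1 : ∀ i, (c i * ρ * c i)ᴴ = c i * ρ * c i := fun i => by
      rw [conjTranspose_mul, conjTranspose_mul, hρ.1.eq, (hherm i).eq, mul_assoc]
    show _ᴴ = _
    rw [conjTranspose_sub, conjTranspose_smul, conjTranspose_sum,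
      Finset.sum_congr rfl fun i _ => h1 i, hρ.1.eq, star_natCast]
  · intro x
    set q : Fin m → (Fin d → ℂ) := fun i => (S * c i) *ᵥ x with hq
    have hterm : ∀ i, star x ⬝ᵥ ((c i * ρ * c i) *ᵥ x) = star (q i) ⬝ᵥ q i := by
      intro i
      have : c i * ρ * c i = (S * c i)ᴴ * (S * c i) := by
        rw [conjTranspose_mul, hSh, (hherm i).eq, ← hSS, hSh]
        noncomm_ring
      rw [this, pinch_aux1]
    have hsumq : S *ᵥ x = ∑ i, q i := by
      simp only [hq, ← pinch_sum_mulVec, ← Finset.mul_sum, hsum, mul_one]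
    have hrho : star x ⬝ᵥ (ρ *ᵥ x) = star (∑ i, q i) ⬝ᵥ (∑ i, q i) := by
      rw [← hSS, pinch_aux1, hsumq]
    have hE : star x ⬝ᵥ (((m : ℂ) • (∑ i, c i * ρ * c i) - ρ) *ᵥ x)
        = (m : ℂ) * (∑ i, star (q i) ⬝ᵥ q i) - star (∑ i, q i) ⬝ᵥ (∑ i, q i) := by
      rw [sub_mulVec, dotProduct_sub, smul_mulVec, dotProduct_smul, pinch_sum_mulVec,
        pinch_dotProduct_sum, hrho]
      simp only [smul_eq_mul, hterm]
    have h1 : (∑ i, star (q i) ⬝ᵥ q i).im = 0 := by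
      rw [Complex.im_sum]; exact Finset.sum_eq_zero fun i _ => pinch_aux2' _
    have h2 : (star (∑ i, q i) ⬝ᵥ (∑ i, q i)).im = 0 := pinch_aux2' _
    rw [hE, Complex.nonneg_iff]
    constructor
    · rw [Complex.sub_re, Complex.mul_re, h1, Complex.natCast_im, Complex.natCast_re,
        mul_zero, sub_zero, sub_nonneg, Complex.re_sum]
      simpa only [WithLp.ofLp_sum, WithLp.ofLp_toLp] using
        pinch_aux3 fun i => (WithLp.toLp 2 (q i) : EuclideanSpace ℂ (Fin d))
    · rw [Complex.sub_im, Complex.mul_im, h1, h2, Complex.natCast_im]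
      ring


end
end

section
/- Eigenvalue count for Kronecker powers: Let x be a Hermitian matrix in M_d(ℂ) having exactly k distinct eigenvalues. Then for every n ≥ 1, the n-fold Kronecker power x^{⊗n} ∈ M_{d^n}(ℂ) has at most (n+1)^{k−1} distinct eigenvalues. -/
open Matrix Filter
open scoped Kronecker ComplexOrder

noncomputable section

namespace KronAux

open Matrix Finset

variable {d : ℕ}

lemma kronPow_mul (A B : Matrix (Fin d) (Fin d) ℂ) (n : ℕ) :
    kronPow (A * B) n = kronPow A n * kronPow B n := by
  ext i j
  simp only [kronPow, Matrix.of_apply, Matrix.mul_apply]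
  rw [Finset.prod_univ_sum, Fintype.piFinset_univ]
  exact Finset.sum_congr rfl fun f _ => Finset.prod_mul_distrib

lemma kronPow_diagonal (v : Fin d → ℂ) (n : ℕ) :
    kronPow (Matrix.diagonal v) n
      = Matrix.diagonal (fun f : Fin n → Fin d => ∏ k, v (f k)) := by
  ext i j
  by_cases h : i = j
  · subst h
    simp [kronPow, Matrix.diagonal_apply_eq]
  · obtain ⟨k, hk⟩ : ∃ k, i k ≠ j k := by
      by_contra hc; push_neg at hc; exact h (funext hc)
    rw [Matrix.diagonal_apply_ne _ h]
    exact Finset.prod_eq_zero (Finset.mem_univ k) (Matrix.diagonal_apply_ne v hk)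

lemma kronPow_one (n : ℕ) :
    kronPow (1 : Matrix (Fin d) (Fin d) ℂ) n = 1 := by
  rw [← Matrix.diagonal_one, kronPow_diagonal]
  simp

lemma kronPow_conjTranspose (A : Matrix (Fin d) (Fin d) ℂ) (n : ℕ) :
    (kronPow A n)ᴴ = kronPow Aᴴ n := by
  ext i j
  simp only [kronPow, Matrix.conjTranspose_apply, Matrix.of_apply]
  rw [star_prod]

lemma kronPow_isHermitian {x : Matrix (Fin d) (Fin d) ℂ} (hx : x.IsHermitian) (n : ℕ) :
    (kronPow x n).IsHermitian := by
  unfold Matrix.IsHermitian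
  rw [kronPow_conjTranspose, hx.eq]

lemma card_image_prod_le {n k : ℕ} (lam : Fin d → ℝ) (E : Finset ℝ)
    (hmem : ∀ i, lam i ∈ E) (hE : E.card = k) :
    (Finset.image (fun f : Fin n → Fin d => ∏ j, lam (f j)) Finset.univ).card
      ≤ (n + 1) ^ (k - 1) := by
  classical
  rcases E.eq_empty_or_nonempty with hE0 | ⟨μ₀, hμ₀⟩
  · have hd : d = 0 := by
      by_contra hd
      have := hmem ⟨0, Nat.pos_of_ne_zero hd⟩
      simp [hE0] at this
    subst hd
    calc (Finset.image (fun f : Fin n → Fin 0 => ∏ j, lam (f j)) Finset.univ).card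
        ≤ (Finset.univ : Finset (Fin n → Fin 0)).card := Finset.card_image_le
      _ = Fintype.card (Fin n → Fin 0) := Finset.card_univ
      _ ≤ 1 := by
          rw [Fintype.card_fun]
          simpa using Nat.pow_le_pow_left (by norm_num : Fintype.card (Fin 0) ≤ 1) _
      _ ≤ (n + 1) ^ (k - 1) := Nat.one_le_pow _ _ (by omega)
  · set E' := E.erase μ₀ with hE'def
    have hE'card : E'.card = k - 1 := by
      rw [hE'def, Finset.card_erase_of_mem hμ₀, hE]
    set c : (Fin n → Fin d) → ℝ → ℕ :=
      fun f μ => (Finset.univ.filter fun j => lam (f j) = μ).card with hc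
    have hcle : ∀ f μ, c f μ ≤ n := fun f μ => by
      simpa using (Finset.card_filter_le Finset.univ fun j => lam (f j) = μ)
    have hsum : ∀ f, ∑ μ ∈ E, c f μ = n := fun f => by
      rw [← Finset.card_eq_sum_card_fiberwise (fun j _ => hmem (f j))]
      simp
    have hprod : ∀ f, (∏ j, lam (f j)) = ∏ μ ∈ E, μ ^ c f μ := fun f => by
      rw [← Finset.prod_fiberwise_of_maps_to (fun j _ => hmem (f j)) (fun j => lam (f j))]
      refine Finset.prod_congr rfl fun μ _ => ?_
      rw [Finset.prod_congr rfl (fun j hj => (Finset.mem_filter.mp hj).2),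
        Finset.prod_const]
    set Φ : (Fin n → Fin d) → (↥E' → Fin (n + 1)) :=
      fun f μ => ⟨c f μ, Nat.lt_succ_of_le (hcle f μ)⟩ with hΦ
    set F : (↥E' → Fin (n + 1)) → ℝ := fun g =>
      μ₀ ^ (n - ∑ μ, (g μ : ℕ)) * ∏ μ : ↥E', (μ : ℝ) ^ (g μ : ℕ) with hF
    have key : ∀ f, (∏ j, lam (f j)) = F (Φ f) := by
      intro f
      have h1 : c f μ₀ + ∑ μ ∈ E', c f μ = n := by
        rw [Finset.add_sum_erase E (c f) hμ₀]
        exact hsum f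
      have h2 : ∑ μ : ↥E', ((Φ f μ : ℕ)) = ∑ μ ∈ E', c f μ := by
        simp only [hΦ]
        exact Finset.sum_coe_sort E' (fun μ => c f μ)
      have h3 : ∏ μ : ↥E', ((μ : ℝ)) ^ ((Φ f μ : ℕ)) = ∏ μ ∈ E', μ ^ c f μ := by
        simp only [hΦ]
        exact Finset.prod_coe_sort E' (fun μ => μ ^ c f μ)
      rw [hprod f, ← Finset.mul_prod_erase E _ hμ₀, hF]
      simp only [h2, h3]
      congr 2
      omega
    have himg : Finset.image (fun f : Fin n → Fin d => ∏ j, lam (f j)) Finset.univ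
        = Finset.image F (Finset.image Φ Finset.univ) := by
      rw [Finset.image_image]
      exact Finset.image_congr fun f _ => key f
    rw [himg]
    calc (Finset.image F (Finset.image Φ Finset.univ)).card
        ≤ (Finset.image Φ Finset.univ).card := Finset.card_image_le
      _ ≤ (Finset.univ : Finset (↥E' → Fin (n + 1))).card :=
          Finset.card_le_card (Finset.subset_univ _)
      _ = (n + 1) ^ (k - 1) := by
          rw [Finset.card_univ, Fintype.card_fun, Fintype.card_coe, hE'card, Fintype.card_fin]

end KronAux


/-- Eigenvalue count for Kronecker powers. -/
theorem kronPow_card_distinctEigs {d k : ℕ} (x : Matrix (Fin d) (Fin d) ℂ)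
    (hx : x.IsHermitian) (hk : (distinctEigs x).card = k) (n : ℕ) (hn : 1 ≤ n) :
    (distinctEigs (kronPow x n)).card ≤ (n + 1) ^ (k - 1) := by
  classical
  have H : (kronPow x n).IsHermitian := KronAux.kronPow_isHermitian hx n
  -- the Kronecker power is unitarily conjugate to a diagonal matrix of products
  set U : Matrix (Fin d) (Fin d) ℂ := (hx.eigenvectorUnitary : Matrix (Fin d) (Fin d) ℂ) with hU
  set V : Matrix (Fin n → Fin d) (Fin n → Fin d) ℂ := kronPow U n with hV
  have hUmem : U ∈ unitary (Matrix (Fin d) (Fin d) ℂ) := hx.eigenvectorUnitary.2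
  have hVmem : V ∈ unitary (Matrix (Fin n → Fin d) (Fin n → Fin d) ℂ) := by
    rw [Unitary.mem_iff]
    constructor
    · rw [hV, Matrix.star_eq_conjTranspose, KronAux.kronPow_conjTranspose,
        ← KronAux.kronPow_mul, ← Matrix.star_eq_conjTranspose,
        Unitary.star_mul_self_of_mem hUmem, KronAux.kronPow_one]
    · rw [hV, Matrix.star_eq_conjTranspose, KronAux.kronPow_conjTranspose,
        ← KronAux.kronPow_mul, ← Matrix.star_eq_conjTranspose,
        Unitary.mul_star_self_of_mem hUmem, KronAux.kronPow_one]
  have hdecomp : kronPow x n =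
      V * Matrix.diagonal (fun f : Fin n → Fin d => ((∏ j, hx.eigenvalues (f j) : ℝ) : ℂ))
        * star V := by
    conv_lhs => rw [hx.spectral_theorem, Unitary.conjStarAlgAut_apply]
    rw [KronAux.kronPow_mul, KronAux.kronPow_mul, KronAux.kronPow_diagonal]
    rw [Matrix.star_eq_conjTranspose, Matrix.star_eq_conjTranspose,
      KronAux.kronPow_conjTranspose]
    congr 2
    · ext f
      simp
  have hspecC : spectrum ℂ (kronPow x n)
      = Set.range (fun f : Fin n → Fin d => ((∏ j, hx.eigenvalues (f j) : ℝ) : ℂ)) := by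
    rw [hdecomp]
    rw [show V * Matrix.diagonal
          (fun f : Fin n → Fin d => ((∏ j, hx.eigenvalues (f j) : ℝ) : ℂ)) * star V
        = (⟨V, hVmem⟩ : unitary (Matrix (Fin n → Fin d) (Fin n → Fin d) ℂ)) *
          Matrix.diagonal
            (fun f : Fin n → Fin d => ((∏ j, hx.eigenvalues (f j) : ℝ) : ℂ)) *
          (star (⟨V, hVmem⟩ : unitary (Matrix (Fin n → Fin d) (Fin n → Fin d) ℂ)) :
            Matrix (Fin n → Fin d) (Fin n → Fin d) ℂ) from rfl]
    rw [Unitary.spectrum_star_right_conjugate, spectrum_diagonal]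
  have hsub : distinctEigs (kronPow x n) ⊆
      Finset.image (fun f : Fin n → Fin d => ∏ j, hx.eigenvalues (f j)) Finset.univ := by
    intro μ hμ
    rw [distinctEigs, dif_pos H] at hμ
    obtain ⟨i, -, rfl⟩ := Finset.mem_image.mp hμ
    have hmem : ((H.eigenvalues i : ℝ) : ℂ) ∈ spectrum ℂ (kronPow x n) := by
      have := H.eigenvalues_mem_spectrum_real i
      rwa [← spectrum.algebraMap_mem_iff ℂ] at this
    rw [hspecC] at hmem
    obtain ⟨f, hf⟩ := hmem
    refine Finset.mem_image.mpr ⟨f, Finset.mem_univ f, ?_⟩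
    have hf' : ((∏ j, hx.eigenvalues (f j) : ℝ) : ℂ) = ((H.eigenvalues i : ℝ) : ℂ) := hf
    exact_mod_cast hf'
  calc (distinctEigs (kronPow x n)).card
      ≤ (Finset.image (fun f : Fin n → Fin d => ∏ j, hx.eigenvalues (f j))
          Finset.univ).card := Finset.card_le_card hsub
    _ ≤ (n + 1) ^ (k - 1) := by
        refine KronAux.card_image_prod_le hx.eigenvalues (distinctEigs x) ?_ hk
        intro i
        rw [distinctEigs, dif_pos hx]
        exact Finset.mem_image_of_mem _ (Finset.mem_univ i)


end
end
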